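/- Let Σ be a planar model satisfying Assumption (*) with 1 ≤ α < 2, where α = dim(Σ). Then there exist p₀ > 0 and κ > 0 such that for ℙ-almost every ω ∈ Ω: liminf_{n→∞} inf_{W ∈ ℝP¹} ξ^(W)({V ∈ ℝP¹ : H_n(π_V η^(ω)) ≥ α − 1 + κ}) ≥ p₀. -/

import Mathlib

open MeasureTheory Filter Set
open scoped ENNReal Topology Classical

noncomputable section

namespace SSmodel

/-- The left shift on sequence space. -/
def shiftMap {I : Type} (ω : ℕ → I) : ℕ → I := fun n => ω (n + 1)

/-- The `j`-th iterate of the left shift. -/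
def shiftN {I : Type} (j : ℕ) (ω : ℕ → I) : ℕ → I := fun n => ω (n + j)

/-- A planar model: a finite family of homogeneous self-similar IFSs on ℂ together with
probability vectors and a selection measure on the symbolic space. -/
structure PlanarModel (I : Type) [Fintype I] [MeasurableSpace I] where
  k : I → ℕ
  k_pos : ∀ i, 0 < k i
  lam : I → ℂ
  lam_ne : ∀ i, lam i ≠ 0
  lam_lt : ∀ i, ‖lam i‖ < 1
  tr : (i : I) → Fin (k i) → ℂ
  p : (i : I) → Fin (k i) → ℝ
  p_pos : ∀ i j, 0 < p i j
  p_sum : ∀ i, ∑ j, p i j = 1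
  P : Measure (ℕ → I)
  P_prob : IsProbabilityMeasure P

namespace PlanarModel

variable {I : Type} [Fintype I] [MeasurableSpace I] (M : PlanarModel I)

/-- The coding map Π_ω. -/
def codingMap (ω : ℕ → I) (u : (n : ℕ) → Fin (M.k (ω n))) : ℂ :=
  ∑' n : ℕ, (∏ j ∈ Finset.range n, M.lam (ω j)) * M.tr (ω n) (u n)

/-- Characterization of the infinite product measure ⊗ₙ p_{ωₙ} via cylinders. -/
def IsProductMeasure (ω : ℕ → I) (μ : Measure ((n : ℕ) → Fin (M.k (ω n)))) : Prop :=
  IsProbabilityMeasure μ ∧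
    ∀ (n : ℕ) (u : (j : Fin n) → Fin (M.k (ω j.val))),
      μ {x | ∀ j : Fin n, x j.val = u j} = ∏ j : Fin n, ENNReal.ofReal (M.p (ω j.val) (u j))

/-- `η` is the family of random measures η^(ω) generated by the model:
η^(ω) is the pushforward under Π_ω of the product measure ⊗ₙ p_{ωₙ}. -/
def IsCodingFamily (η : (ℕ → I) → Measure ℂ) : Prop :=
  ∀ ω : ℕ → I, ∃ μ : Measure ((n : ℕ) → Fin (M.k (ω n))),
    M.IsProductMeasure ω μ ∧ η ω = μ.map (M.codingMap ω)

/-- Assumption (*) : the selection measure is shift-invariant and ergodic, some IFS occurring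
with positive probability has two distinct maps, and some rotation occurring with positive
probability is not real. -/
def AssumptionStar : Prop :=
  Ergodic shiftMap M.P ∧
    (∃ i₀ : I, M.P {ω | ω 0 = i₀} ≠ 0 ∧ ∃ j j' : Fin (M.k i₀), M.tr i₀ j ≠ M.tr i₀ j') ∧
    (∃ i₁ : I, M.P {ω | ω 0 = i₁} ≠ 0 ∧ (M.lam i₁).im ≠ 0)

/-- Non-degeneracy of the model. -/
def NonDegenerate : Prop :=
  ∃ i₀ : I, M.P {ω | ω 0 = i₀} ≠ 0 ∧ ∃ j j' : Fin (M.k i₀), M.tr i₀ j ≠ M.tr i₀ j'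

/-- The similarity dimension of the model (entropy over Lyapunov exponent). -/
def sdim : ℝ :=
  (∫ ω, (-∑ j, M.p (ω 0) j * Real.log (M.p (ω 0) j)) ∂M.P) /
    (-∫ ω, Real.log (‖M.lam (ω 0)‖) ∂M.P)

/-- f_u^(ω)(0), for a word u of length n. -/
def finCode (ω : ℕ → I) (n : ℕ) (u : (j : Fin n) → Fin (M.k (ω j.val))) : ℂ :=
  ∑ m : Fin n, (∏ j ∈ Finset.range m.val, M.lam (ω j)) * M.tr (ω m.val) (u m)

/-- The product of the contraction parts along the first n symbols. -/
def lamProd (ω : ℕ → I) (n : ℕ) : ℂ := ∏ j ∈ Finset.range n, M.lam (ω j)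

/-- The minimal distance Δ_n^(ω) between distinct cylinder points. -/
def Delta (ω : ℕ → I) (n : ℕ) : ℝ :=
  if ∃ u v : (j : Fin n) → Fin (M.k (ω j.val)), u ≠ v then
    sInf {d : ℝ | ∃ u v : (j : Fin n) → Fin (M.k (ω j.val)), u ≠ v ∧
      d = ‖M.finCode ω n u - M.finCode ω n v‖}
  else 0

/-- `R` is a good radius for the model: the closed ball B(0,R) is mapped into itself by all the
maps and 2·R·r_min > 1/2. -/
def GoodRadius (R : ℝ) : Prop :=
  0 < R ∧ (∀ (i : I) (j : Fin (M.k i)) (z : ℂ), ‖z‖ ≤ R →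
      ‖M.lam i * z + M.tr i j‖ < R) ∧
    ∀ i : I, (1 : ℝ) / 2 < 2 * R * ‖M.lam i‖

/-- `np ω n` is the integer n'(ω) adapted to scale 2^{-n}: it satisfies
2R·∏_{i<n'} r_{ω_i} ≤ 2^{-n} ≤ 2R·∏_{i<n'-1} r_{ω_i}. -/
def IsNPrime (R : ℝ) (np : (ℕ → I) → ℕ → ℕ) : Prop :=
  ∀ (ω : ℕ → I) (n : ℕ),
    2 * R * (∏ i ∈ Finset.range (np ω n), ‖M.lam (ω i)‖) ≤ (2 : ℝ) ^ (-(n : ℤ)) ∧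
      (2 : ℝ) ^ (-(n : ℤ)) ≤ 2 * R * ∏ i ∈ Finset.range (np ω n - 1), ‖M.lam (ω i)‖

/-- The point of the circle (in the squared identification ℝP¹ ≅ 𝕋) corresponding to the
rotation part φ_i of the i-th IFS: φ_i². -/
def rotPt (i : I) : ℂ := (M.lam i / (‖M.lam i‖ : ℂ)) ^ 2

/-- Generators of the rotation group G_Σ (squared identification), together with inverses. -/
def rotGens : Set ℂ := {z | ∃ i : I, z = M.rotPt i ∨ z = (starRingEnd ℂ) (M.rotPt i)}

/-- The closed orbit G_Σ·v of a point v of the circle. -/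
def orbitClosure (v : ℂ) : Set ℂ :=
  closure ((fun g => g * v) '' ((Submonoid.closure M.rotGens : Submonoid ℂ) : Set ℂ))

/-- Characterization of ξ^(W) (for the line W corresponding to the circle point v in the
squared identification): the unique probability measure on the coset G_Σ·v invariant under
all the rotations of the model. -/
def IsXiW (v : ℂ) (ξ : Measure ℂ) : Prop :=
  IsProbabilityMeasure ξ ∧ (∀ i : I, ξ.map (fun z => M.rotPt i * z) = ξ) ∧
    ξ (M.orbitClosure v) = 1

/-- The discrete measure ν^{(ω,n)} = ∑_u p_u δ_{f_u^(ω)(0)}. -/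
def nuMeasure (ω : ℕ → I) (n : ℕ) : Measure ℂ :=
  ∑ u : (j : Fin n) → Fin (M.k (ω j.val)),
    ENNReal.ofReal (∏ j : Fin n, M.p (ω j.val) (u j)) • Measure.dirac (M.finCode ω n u)

end PlanarModel

/-! ### Entropy, components, projections -/

/-- -x·log₂ x. -/
def plog (x : ℝ) : ℝ := -(x * Real.logb 2 x)

/-- Level-n dyadic cell of ℝ² ≅ ℂ with index a ∈ ℤ². -/
def cell2 (n : ℕ) (a : ℤ × ℤ) : Set ℂ :=
  {z : ℂ | (a.1 : ℝ) ≤ (2 : ℝ) ^ n * z.re ∧ (2 : ℝ) ^ n * z.re < (a.1 : ℝ) + 1 ∧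
    (a.2 : ℝ) ≤ (2 : ℝ) ^ n * z.im ∧ (2 : ℝ) ^ n * z.im < (a.2 : ℝ) + 1}

/-- Entropy (base 2) of a measure on ℂ w.r.t. the level-n dyadic partition. -/
def H2 (μ : Measure ℂ) (n : ℕ) : ℝ := ∑' a : ℤ × ℤ, plog (μ (cell2 n a)).toReal

/-- Normalized entropy H_n(μ) = H(μ,D_n)/n for measures on ℂ. -/
def Hn2 (μ : Measure ℂ) (n : ℕ) : ℝ := H2 μ n / n

/-- Level-n dyadic cell of ℝ with index a ∈ ℤ. -/
def cell1 (n : ℕ) (a : ℤ) : Set ℝ :=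
  {x : ℝ | (a : ℝ) ≤ (2 : ℝ) ^ n * x ∧ (2 : ℝ) ^ n * x < (a : ℝ) + 1}

/-- Entropy (base 2) of a measure on ℝ w.r.t. the level-n dyadic partition. -/
def H1 (μ : Measure ℝ) (n : ℕ) : ℝ := ∑' a : ℤ, plog (μ (cell1 n a)).toReal

/-- Normalized entropy for measures on ℝ. -/
def Hn1 (μ : Measure ℝ) (n : ℕ) : ℝ := H1 μ n / n

/-- Orthogonal projection of the plane onto the line with unit direction w,
composed with the isometry to ℝ: z ↦ ⟨z,w⟩. -/
def projMap (w : ℂ) (z : ℂ) : ℝ := z.re * w.re + z.im * w.im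

/-- Normalized entropy of the projection π_W μ, W the line with unit direction w. -/
def projHn (w : ℂ) (μ : Measure ℂ) (m : ℕ) : ℝ := Hn1 (μ.map (projMap w)) m

/-- Unit vectors of the plane. -/
abbrev UnitVec : Type := {w : ℂ // ‖w‖ = 1}

/-- A fixed choice of direction (unit vector) of the line corresponding to the circle
point v in the squared identification ℝP¹ ≅ 𝕋: a square root of v. -/
def lineDir (v : ℂ) : ℂ := Complex.exp (Complex.log v / 2)

/-- Index of the level-n dyadic cell containing x. -/
def cellIdx (n : ℕ) (x : ℂ) : ℤ × ℤ := (⌊(2 : ℝ) ^ n * x.re⌋, ⌊(2 : ℝ) ^ n * x.im⌋)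

/-- The level-n dyadic cell D_n(x) containing x. -/
def dyadicCellOf (n : ℕ) (x : ℂ) : Set ℂ := cell2 n (cellIdx n x)

/-- The homothety T_D mapping D_n(x) onto the unit square. -/
def rescaleMap (n : ℕ) (x : ℂ) (z : ℂ) : ℂ :=
  (2 : ℂ) ^ n * z - (((cellIdx n x).1 : ℂ) + ((cellIdx n x).2 : ℂ) * Complex.I)

/-- Raw component μ_{x,n}: normalized restriction of μ to D_n(x). -/
def rawComponent (μ : Measure ℂ) (n : ℕ) (x : ℂ) : Measure ℂ :=
  (μ (dyadicCellOf n x))⁻¹ • μ.restrict (dyadicCellOf n x)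

/-- Rescaled component μ^{x,n} = T_{D_n(x)}(μ_{x,n}). -/
def rescaledComponent (μ : Measure ℂ) (n : ℕ) (x : ℂ) : Measure ℂ :=
  (rawComponent μ n x).map (rescaleMap n x)

/-- μ is exact dimensional with dimension α. -/
def ExactDim (μ : Measure ℂ) (α : ℝ) : Prop :=
  ∀ᵐ x ∂μ, Tendsto (fun r : ℝ => Real.log (μ (Metric.closedBall x r)).toReal / Real.log r)
    (𝓝[>] (0 : ℝ)) (𝓝 α)

/-- The saturation dimension satdim(μ, ε, m, k): the maximal dimension of a subspace V ≤ ℝ²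
such that the proportion (w.r.t. μ) of level-k rescaled components that are (V,ε,m)-saturated
is at least 1-ε. (A measure ν is (V,ε,m)-saturated if H_m(ν) ≥ H_m(π_{V⊥}ν) + dim V − ε;
the subspaces of ℝ² ≅ ℂ are 0, the lines span(w), and ℝ² itself, and for V = span(w) the
orthogonal complement is the line with unit direction i·w.) -/
def satdim (μ : Measure ℂ) (ε : ℝ) (m k : ℕ) : ℕ :=
  if (1 - ε : ℝ) ≤ (μ {x | 2 - ε ≤ Hn2 (rescaledComponent μ k x) m}).toReal then 2
  else if ∃ w : ℂ, ‖w‖ = 1 ∧ (1 - ε : ℝ) ≤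
      (μ {x | projHn (Complex.I * w) (rescaledComponent μ k x) m + 1 - ε ≤
        Hn2 (rescaledComponent μ k x) m}).toReal then 1
  else 0

/-- μ is (C,ρ)-Frostman on tubes: μ(B(W+x,r)) ≤ C·r^ρ for every line W+x and r>0. -/
def FrostmanOnTubes (μ : Measure ℂ) (C ρ : ℝ) : Prop :=
  ∀ w : ℂ, ‖w‖ = 1 → ∀ x : ℂ, ∀ r : ℝ, 0 < r →
    μ {z : ℂ | |((z - x) * (starRingEnd ℂ) w).im| < r} ≤ ENNReal.ofReal (C * r ^ ρ)

/-- Total variation distance between finite Borel measures on ℂ. -/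
def dTV (μ ν : Measure ℂ) : ℝ :=
  ⨆ s : {s : Set ℂ // MeasurableSet s}, |(μ s.1).toReal - (ν s.1).toReal|

/-- Conditional entropy H(μ, D_m | D_n) (base 2). -/
def condH (μ : Measure ℂ) (m n : ℕ) : ℝ :=
  ∑' a : ℤ × ℤ, (μ (cell2 n a)).toReal * H2 ((μ (cell2 n a))⁻¹ • μ.restrict (cell2 n a)) m

/-- The Fourier transform of a measure on ℂ ≅ ℝ². -/
def FT (μ : Measure ℂ) (ξ : ℂ) : ℂ :=
  ∫ z, Complex.exp (2 * Real.pi * Complex.I * ((z * (starRingEnd ℂ) ξ).re : ℂ)) ∂μ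

/-- μ ∈ 𝒟₂(σ): power Fourier decay with exponent σ. -/
def MemD2 (μ : Measure ℂ) (σ : ℝ) : Prop :=
  ∃ C : ℝ, ∀ ξ : ℂ, 1 ≤ ‖ξ‖ → ‖FT μ ξ‖ ≤ C * ‖ξ‖ ^ (-σ)

/-- ℙ is a Bernoulli measure on I^ℕ. -/
def IsBernoulli {I : Type} [Fintype I] [MeasurableSpace I] (P : Measure (ℕ → I)) : Prop :=
  IsProbabilityMeasure P ∧ ∃ q : I → ℝ, (∀ i, 0 ≤ q i) ∧ ∑ i, q i = 1 ∧
    ∀ (n : ℕ) (u : Fin n → I),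
      P {ω | ∀ j : Fin n, ω j.val = u j} = ∏ j : Fin n, ENNReal.ofReal (q (u j))

/-- ℙ is a fully supported Bernoulli measure on I^ℕ. -/
def IsFullBernoulli {I : Type} [Fintype I] [MeasurableSpace I] (P : Measure (ℕ → I)) : Prop :=
  IsProbabilityMeasure P ∧ ∃ q : I → ℝ, (∀ i, 0 < q i) ∧ ∑ i, q i = 1 ∧
    ∀ (n : ℕ) (u : Fin n → I),
      P {ω | ∀ j : Fin n, ω j.val = u j} = ∏ j : Fin n, ENNReal.ofReal (q (u j))

end SSmodel

namespace SSmodel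

/-- The (unnormalized) n-truncated k-component: the part of the n-th level decomposition of
η^(ω) consisting of the pieces f_u η^{(Tⁿω)} whose supporting ball B_u^(ω) = f_u(B(0,R)) is
contained in the dyadic cell D_k(x). -/
def truncSum {I : Type} [Fintype I] [MeasurableSpace I] (M : PlanarModel I)
    (η : (ℕ → I) → Measure ℂ) (R : ℝ) (ω : ℕ → I) (n k : ℕ) (x : ℂ) : Measure ℂ :=
  ∑ u : (j : Fin n) → Fin (M.k (ω j.val)),
    if ∀ z : ℂ, ‖z‖ ≤ R → M.lamProd ω n * z + M.finCode ω n u ∈ dyadicCellOf k x then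
      ENNReal.ofReal (∏ j : Fin n, M.p (ω j.val) (u j)) •
        ((η (shiftN n ω)).map (fun z => M.lamProd ω n * z + M.finCode ω n u))
    else 0

/-- The n-truncated k-component η^(ω)_{n,[x,k]} (normalized). -/
def truncComponent {I : Type} [Fintype I] [MeasurableSpace I] (M : PlanarModel I)
    (η : (ℕ → I) → Measure ℂ) (R : ℝ) (ω : ℕ → I) (n k : ℕ) (x : ℂ) : Measure ℂ :=
  (truncSum M η R ω n k x Set.univ)⁻¹ • truncSum M η R ω n k x

end SSmodel

open SSmodel SSmodel.PlanarModel

namespace SSmodel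

lemma plog_zero : plog 0 = 0 := by simp [plog]

lemma plog_eq_log (x : ℝ) : plog x = -(x * Real.log x) / Real.log 2 := by
  simp only [plog, Real.logb]
  ring

lemma plog_nonneg {x : ℝ} (h0 : 0 ≤ x) (h1 : x ≤ 1) : 0 ≤ plog x := by
  have h := Real.logb_nonpos one_lt_two h0 h1
  have h2 := mul_nonpos_of_nonneg_of_nonpos h0 h
  simp only [plog]; linarith

lemma plog_subadd {x y : ℝ} (hx : 0 ≤ x) (hy : 0 ≤ y) :
    plog (x + y) ≤ plog x + plog y := by
  rcases hx.eq_or_lt with h | hx'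
  · simp [← h, plog_zero]
  rcases hy.eq_or_lt with h | hy'
  · simp [← h, plog_zero]
  have h1 : Real.logb 2 x ≤ Real.logb 2 (x + y) :=
    Real.logb_le_logb_of_le one_lt_two hx' (by linarith)
  have h2 : Real.logb 2 y ≤ Real.logb 2 (x + y) :=
    Real.logb_le_logb_of_le one_lt_two hy' (by linarith)
  have e1 := mul_le_mul_of_nonneg_left h1 hx
  have e2 := mul_le_mul_of_nonneg_left h2 hy
  have e3 : (x + y) * Real.logb 2 (x + y)
      = x * Real.logb 2 (x + y) + y * Real.logb 2 (x + y) := by ring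
  simp only [plog]
  linarith

lemma plog_sum_le {ι : Type*} (s : Finset ι) (f : ι → ℝ) (hf : ∀ i ∈ s, 0 ≤ f i) :
    plog (∑ i ∈ s, f i) ≤ ∑ i ∈ s, plog (f i) := by
  classical
  induction s using Finset.cons_induction with
  | empty => simp [plog]
  | cons a s ha ih =>
    rw [Finset.sum_cons, Finset.sum_cons]
    have h1 : 0 ≤ f a := hf a (Finset.mem_cons_self _ _)
    have h2 : 0 ≤ ∑ i ∈ s, f i :=
      Finset.sum_nonneg fun i hi => hf i (Finset.mem_cons_of_mem hi)
    exact (plog_subadd h1 h2).trans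
      (add_le_add_right (ih fun i hi => hf i (Finset.mem_cons_of_mem hi)) _)

/-- Entropy of a (sub)probability vector supported on at most `card` positive entries is at
most `plog(total) + total·log₂(card of positive entries)`. -/
lemma sum_plog_le_card {ι : Type*} (s : Finset ι) (f : ι → ℝ) (hf : ∀ i ∈ s, 0 ≤ f i) :
    ∑ i ∈ s, plog (f i) ≤ plog (∑ i ∈ s, f i)
      + (∑ i ∈ s, f i) * Real.logb 2 ((s.filter fun i => f i ≠ 0).card) := by
  classical
  set t := s.filter fun i => f i ≠ 0 with ht
  have hsum : ∑ i ∈ s, f i = ∑ i ∈ t, f i := by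
    rw [ht]
    exact (Finset.sum_filter_ne_zero s).symm
  have hplogsum : ∑ i ∈ s, plog (f i) = ∑ i ∈ t, plog (f i) := by
    rw [ht, Finset.sum_filter]
    apply Finset.sum_congr rfl
    intro i _
    by_cases h : f i ≠ 0
    · simp [h]
    · push_neg at h
      simp [h, plog_zero]
  rcases t.eq_empty_or_nonempty with h0 | hne
  · rw [hplogsum, hsum, h0]
    simp [plog]
  have hpos : ∀ i ∈ t, 0 < f i := by
    intro i hi
    rw [ht, Finset.mem_filter] at hi
    exact lt_of_le_of_ne (hf i hi.1) (Ne.symm hi.2)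
  set m := ∑ i ∈ t, f i with hm
  have hmpos : 0 < m := Finset.sum_pos hpos hne
  have hcard : (0:ℝ) < t.card := by
    have := Finset.card_pos.mpr hne
    exact_mod_cast this
  set c := m / t.card with hc
  have hcpos : 0 < c := div_pos hmpos hcard
  -- pointwise : f i * log (c / f i) ≤ c - f i
  have key : ∀ i ∈ t, -(f i * Real.log (f i)) ≤ c - f i - f i * Real.log c := by
    intro i hi
    have hfi := hpos i hi
    have h1 : Real.log (c / f i) ≤ c / f i - 1 :=
      Real.log_le_sub_one_of_pos (div_pos hcpos hfi)
    have h2 : f i * Real.log (c / f i) ≤ f i * (c / f i - 1) :=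
      mul_le_mul_of_nonneg_left h1 hfi.le
    rw [Real.log_div (ne_of_gt hcpos) (ne_of_gt hfi)] at h2
    have h3 : f i * (c / f i - 1) = c - f i := by
      field_simp
    nlinarith [h2, h3]
  have hsum2 : ∑ i ∈ t, -(f i * Real.log (f i))
      ≤ ∑ i ∈ t, (c - f i - f i * Real.log c) := Finset.sum_le_sum key
  have hrhs : ∑ i ∈ t, (c - f i - f i * Real.log c)
      = t.card * c - m - m * Real.log c := by
    rw [Finset.sum_sub_distrib, Finset.sum_sub_distrib, ← Finset.sum_mul, ← hm]
    simp [Finset.sum_const, nsmul_eq_mul]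
  have hcc : (t.card : ℝ) * c = m := by
    rw [hc]; field_simp
  have hlogc : Real.log c = Real.log m - Real.log t.card := by
    rw [hc, Real.log_div (ne_of_gt hmpos) (ne_of_gt hcard)]
  have main : ∑ i ∈ t, -(f i * Real.log (f i))
      ≤ -(m * Real.log m) + m * Real.log t.card := by
    have h4 := hsum2.trans (le_of_eq hrhs)
    rw [hcc, hlogc] at h4
    have h5 : m - m - m * (Real.log m - Real.log (t.card:ℝ))
        = -(m * Real.log m) + m * Real.log (t.card:ℝ) := by ring
    linarith [h4, h5.le]
  -- now convert to logb 2
  have hlog2 : (0:ℝ) < Real.log 2 := Real.log_pos one_lt_two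
  rw [hplogsum, hsum]
  have lhs_eq : ∑ i ∈ t, plog (f i) = (∑ i ∈ t, -(f i * Real.log (f i))) / Real.log 2 := by
    rw [Finset.sum_div]
    exact Finset.sum_congr rfl fun i _ => plog_eq_log (f i)
  calc ∑ i ∈ t, plog (f i)
      = (∑ i ∈ t, -(f i * Real.log (f i))) / Real.log 2 := lhs_eq
    _ ≤ (-(m * Real.log m) + m * Real.log t.card) / Real.log 2 := by
        gcongr
    _ = plog m + m * Real.logb 2 (t.card) := by
        rw [plog_eq_log, Real.logb]
        ring

end SSmodel
namespace SSmodel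

/-- Gibbs inequality / subadditivity of entropy for a two-dimensional subprobability array. -/
lemma gibbs_subadd {ιa ιb : Type*} (s : Finset ιa) (t : Finset ιb) (f : ιa → ιb → ℝ)
    (hf : ∀ i ∈ s, ∀ j ∈ t, 0 ≤ f i j) (htot : ∑ i ∈ s, ∑ j ∈ t, f i j ≤ 1) :
    ∑ i ∈ s, ∑ j ∈ t, plog (f i j) ≤
      (∑ i ∈ s, plog (∑ j ∈ t, f i j)) + ∑ j ∈ t, plog (∑ i ∈ s, f i j) := by
  classical
  set r : ιa → ℝ := fun i => ∑ j ∈ t, f i j with hrdef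
  set c : ιb → ℝ := fun j => ∑ i ∈ s, f i j with hcdef
  have hr : ∀ i ∈ s, 0 ≤ r i := fun i hi => Finset.sum_nonneg fun j hj => hf i hi j hj
  have hc : ∀ j ∈ t, 0 ≤ c j := fun j hj => Finset.sum_nonneg fun i hi => hf i hi j hj
  set m : ℝ := ∑ i ∈ s, r i with hmdef
  have hm0 : 0 ≤ m := Finset.sum_nonneg hr
  have hm1 : m ≤ 1 := htot
  have hmc : ∑ j ∈ t, c j = m := by
    rw [hmdef, hrdef, hcdef]
    exact Finset.sum_comm.symm
  have key : ∀ i ∈ s, ∀ j ∈ t, -(f i j * Real.log (f i j))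
      ≤ r i * c j - f i j - (f i j * Real.log (r i) + f i j * Real.log (c j)) := by
    intro i hi j hj
    rcases (hf i hi j hj).eq_or_lt with h0 | hpos
    · rw [← h0]
      simpa using mul_nonneg (hr i hi) (hc j hj)
    · have hrpos : 0 < r i :=
        lt_of_lt_of_le hpos (Finset.single_le_sum (fun j hj => hf i hi j hj) hj)
      have hcpos : 0 < c j :=
        lt_of_lt_of_le hpos (Finset.single_le_sum (fun i' hi' => hf i' hi' j hj) hi)
      have h1 : Real.log ((r i * c j) / f i j) ≤ (r i * c j) / f i j - 1 :=
        Real.log_le_sub_one_of_pos (div_pos (mul_pos hrpos hcpos) hpos)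
      have h2 := mul_le_mul_of_nonneg_left h1 hpos.le
      rw [Real.log_div (by positivity) (ne_of_gt hpos),
        Real.log_mul (ne_of_gt hrpos) (ne_of_gt hcpos)] at h2
      have h3 : f i j * ((r i * c j) / f i j - 1) = r i * c j - f i j := by field_simp
      nlinarith [h2, h3]
  have hsum2 : ∑ i ∈ s, ∑ j ∈ t, -(f i j * Real.log (f i j))
      ≤ ∑ i ∈ s, ∑ j ∈ t, (r i * c j - f i j - (f i j * Real.log (r i) + f i j * Real.log (c j))) :=
    Finset.sum_le_sum fun i hi => Finset.sum_le_sum fun j hj => key i hi j hj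
  have expand : ∑ i ∈ s, ∑ j ∈ t, (r i * c j - f i j - (f i j * Real.log (r i) + f i j * Real.log (c j)))
      = m * m - m - ((∑ i ∈ s, r i * Real.log (r i)) + ∑ j ∈ t, c j * Real.log (c j)) := by
    have inner : ∀ i ∈ s, ∑ j ∈ t, (r i * c j - f i j - (f i j * Real.log (r i) + f i j * Real.log (c j)))
        = r i * m - r i - (r i * Real.log (r i) + ∑ j ∈ t, f i j * Real.log (c j)) := by
      intro i hi
      rw [Finset.sum_sub_distrib, Finset.sum_sub_distrib, Finset.sum_add_distrib,
        ← Finset.mul_sum, hmc, ← Finset.sum_mul]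
    rw [Finset.sum_congr rfl inner]
    rw [Finset.sum_sub_distrib, Finset.sum_sub_distrib, Finset.sum_add_distrib,
      ← Finset.sum_mul, ← hmdef]
    have last : ∑ i ∈ s, ∑ j ∈ t, f i j * Real.log (c j) = ∑ j ∈ t, c j * Real.log (c j) := by
      rw [Finset.sum_comm]
      exact Finset.sum_congr rfl fun j hj => by rw [← Finset.sum_mul]
    rw [last]
  have numer : ∑ i ∈ s, ∑ j ∈ t, -(f i j * Real.log (f i j))
      ≤ -((∑ i ∈ s, r i * Real.log (r i)) + ∑ j ∈ t, c j * Real.log (c j)) := by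
    have := hsum2.trans (le_of_eq expand)
    nlinarith [this]
  have hlog2 : (0:ℝ) < Real.log 2 := Real.log_pos one_lt_two
  have lhs_eq : ∑ i ∈ s, ∑ j ∈ t, plog (f i j)
      = (∑ i ∈ s, ∑ j ∈ t, -(f i j * Real.log (f i j))) / Real.log 2 := by
    rw [Finset.sum_div]
    refine Finset.sum_congr rfl fun i _ => ?_
    rw [Finset.sum_div]
    exact Finset.sum_congr rfl fun j _ => plog_eq_log _
  have rhs_eq : (∑ i ∈ s, plog (r i)) + ∑ j ∈ t, plog (c j)
      = (-((∑ i ∈ s, r i * Real.log (r i)) + ∑ j ∈ t, c j * Real.log (c j))) / Real.log 2 := by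
    rw [neg_add, ← Finset.sum_neg_distrib, ← Finset.sum_neg_distrib, add_div,
      Finset.sum_div, Finset.sum_div]
    congr 1
    · exact Finset.sum_congr rfl fun i _ => plog_eq_log _
    · exact Finset.sum_congr rfl fun j _ => plog_eq_log _
  calc ∑ i ∈ s, ∑ j ∈ t, plog (f i j)
      = (∑ i ∈ s, ∑ j ∈ t, -(f i j * Real.log (f i j))) / Real.log 2 := lhs_eq
    _ ≤ (-((∑ i ∈ s, r i * Real.log (r i)) + ∑ j ∈ t, c j * Real.log (c j))) / Real.log 2 := by
        gcongr
    _ = (∑ i ∈ s, plog (r i)) + ∑ j ∈ t, plog (c j) := rhs_eq.symm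

end SSmodel
namespace SSmodel
open MeasureTheory

/-- Index of the 1D dyadic cell of the projection in direction `w`. -/
def pj1 (w : ℂ) (n : ℕ) (z : ℂ) : ℤ := ⌊(2:ℝ) ^ n * projMap w z⌋

lemma measurable_projMap (w : ℂ) : Measurable (projMap w) :=
  (Complex.measurable_re.mul_const _).add (Complex.measurable_im.mul_const _)

lemma measurable_pj1 (w : ℂ) (n : ℕ) : Measurable (pj1 w n) :=
  ((measurable_projMap w).const_mul _).floor

lemma measurable_cellIdx (n : ℕ) : Measurable (cellIdx n) :=
  Measurable.prod ((Complex.measurable_re.const_mul _).floor)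
    ((Complex.measurable_im.const_mul _).floor)

lemma cell2_eq_preimage (n : ℕ) (a : ℤ × ℤ) : cell2 n a = cellIdx n ⁻¹' {a} := by
  ext z
  simp only [cell2, Set.mem_setOf_eq, Set.mem_preimage, Set.mem_singleton_iff, cellIdx]
  constructor
  · rintro ⟨h1, h2, h3, h4⟩
    have e1 : ⌊(2:ℝ)^n * z.re⌋ = a.1 := Int.floor_eq_iff.mpr ⟨h1, h2⟩
    have e2 : ⌊(2:ℝ)^n * z.im⌋ = a.2 := Int.floor_eq_iff.mpr ⟨h3, h4⟩
    rw [e1, e2]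
  · intro h
    have e1 : ⌊(2:ℝ)^n * z.re⌋ = a.1 := congrArg Prod.fst h
    have e2 : ⌊(2:ℝ)^n * z.im⌋ = a.2 := congrArg Prod.snd h
    obtain ⟨h1, h2⟩ := Int.floor_eq_iff.mp e1
    obtain ⟨h3, h4⟩ := Int.floor_eq_iff.mp e2
    exact ⟨h1, h2, h3, h4⟩

lemma cell1_eq_preimage (w : ℂ) (n : ℕ) (a : ℤ) :
    projMap w ⁻¹' cell1 n a = pj1 w n ⁻¹' {a} := by
  ext z
  simp only [cell1, Set.mem_preimage, Set.mem_setOf_eq, Set.mem_singleton_iff, pj1]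
  constructor
  · rintro ⟨h1, h2⟩
    exact Int.floor_eq_iff.mpr ⟨h1, h2⟩
  · intro h
    exact Int.floor_eq_iff.mp h

lemma measurableSet_cell1 (n : ℕ) (a : ℤ) : MeasurableSet (cell1 n a) := by
  have : cell1 n a = (fun x : ℝ => (2:ℝ)^n * x) ⁻¹' Set.Ico (a:ℝ) ((a:ℝ)+1) := by
    ext x; simp only [Set.mem_preimage, Set.mem_Ico, cell1, Set.mem_setOf_eq]
  rw [this]
  exact (measurable_id.const_mul _) measurableSet_Ico

lemma measurableSet_cell2 (n : ℕ) (a : ℤ × ℤ) : MeasurableSet (cell2 n a) := by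
  rw [cell2_eq_preimage]
  exact measurable_cellIdx n (measurableSet_singleton a)

/-- Integer bound for cells meeting the ball of radius `B`. -/
def ibound (B : ℝ) (n : ℕ) : ℤ := ⌈(2:ℝ)^n * (2*B)⌉ + 1

def ibox (B : ℝ) (n : ℕ) : Finset ℤ := Finset.Icc (-(ibound B n)) (ibound B n)

def ibox2 (B : ℝ) (n : ℕ) : Finset (ℤ×ℤ) := ibox B n ×ˢ ibox B n

lemma floor_mem_Icc_of_abs_le {x b : ℝ} (h : |x| ≤ b) :
    ⌊x⌋ ∈ Finset.Icc (-(⌈b⌉+1)) (⌈b⌉+1) := by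
  obtain ⟨h1, h2⟩ := abs_le.mp h
  rw [Finset.mem_Icc]
  constructor
  · apply Int.le_floor.mpr
    push_cast
    nlinarith [Int.le_ceil b]
  · calc ⌊x⌋ ≤ ⌊b⌋ := Int.floor_le_floor h2
      _ ≤ ⌈b⌉ := Int.floor_le_ceil b
      _ ≤ ⌈b⌉ + 1 := by omega

lemma abs_projMap_le {B : ℝ} {w z : ℂ} (hw : ‖w‖ = 1) (hz : ‖z‖ ≤ B) :
    |projMap w z| ≤ 2*B := by
  have h1 : |z.re| ≤ B := le_trans (Complex.abs_re_le_norm z) hz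
  have h2 : |z.im| ≤ B := le_trans (Complex.abs_im_le_norm z) hz
  have h3 : |w.re| ≤ 1 := hw ▸ Complex.abs_re_le_norm w
  have h4 : |w.im| ≤ 1 := hw ▸ Complex.abs_im_le_norm w
  have h0 : 0 ≤ B := le_trans (norm_nonneg z) hz
  calc |projMap w z| ≤ |z.re * w.re| + |z.im * w.im| := abs_add_le _ _
    _ = |z.re| * |w.re| + |z.im| * |w.im| := by rw [abs_mul, abs_mul]
    _ ≤ 2 * B := by
        nlinarith [mul_le_mul h1 h3 (abs_nonneg w.re) h0,
          mul_le_mul h2 h4 (abs_nonneg w.im) h0]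

lemma pj1_mem_ibox {B : ℝ} {w z : ℂ} (hw : ‖w‖ = 1) (hz : ‖z‖ ≤ B)
    (n : ℕ) : pj1 w n z ∈ ibox B n := by
  have h := abs_projMap_le hw hz
  have h2 : |(2:ℝ)^n * projMap w z| ≤ (2:ℝ)^n * (2*B) := by
    rw [abs_mul, abs_of_pos (by positivity : (0:ℝ) < (2:ℝ)^n)]
    gcongr
  exact floor_mem_Icc_of_abs_le h2

lemma cellIdx_mem_ibox2 {B : ℝ} {z : ℂ} (hz : ‖z‖ ≤ B) (n : ℕ) :
    cellIdx n z ∈ ibox2 B n := by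
  have h0 : 0 ≤ B := le_trans (norm_nonneg z) hz
  have h1 : |(2:ℝ)^n * z.re| ≤ (2:ℝ)^n * (2*B) := by
    rw [abs_mul, abs_of_pos (by positivity : (0:ℝ) < (2:ℝ)^n)]
    have := le_trans (Complex.abs_re_le_norm z) hz
    nlinarith [abs_nonneg z.re, (by positivity : (0:ℝ) < (2:ℝ)^n)]
  have h2 : |(2:ℝ)^n * z.im| ≤ (2:ℝ)^n * (2*B) := by
    rw [abs_mul, abs_of_pos (by positivity : (0:ℝ) < (2:ℝ)^n)]
    have := le_trans (Complex.abs_im_le_norm z) hz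
    nlinarith [abs_nonneg z.im, (by positivity : (0:ℝ) < (2:ℝ)^n)]
  exact Finset.mem_product.mpr ⟨floor_mem_Icc_of_abs_le h1, floor_mem_Icc_of_abs_le h2⟩

section Support

variable {μ : Measure ℂ} {B : ℝ}

lemma mu_pj1_zero (hsupp : μ {z | B < ‖z‖} = 0) {w : ℂ} (hw : ‖w‖ = 1)
    {n : ℕ} {a : ℤ} (ha : a ∉ ibox B n) : μ (pj1 w n ⁻¹' {a}) = 0 := by
  refine measure_mono_null ?_ hsupp
  intro z hz
  simp only [Set.mem_preimage, Set.mem_singleton_iff] at hz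
  by_contra hcon
  simp only [Set.mem_setOf_eq, not_lt] at hcon
  exact ha (hz ▸ pj1_mem_ibox hw hcon n)

lemma mu_cellIdx_zero (hsupp : μ {z | B < ‖z‖} = 0)
    {n : ℕ} {a : ℤ × ℤ} (ha : a ∉ ibox2 B n) : μ (cellIdx n ⁻¹' {a}) = 0 := by
  refine measure_mono_null ?_ hsupp
  intro z hz
  simp only [Set.mem_preimage, Set.mem_singleton_iff] at hz
  by_contra hcon
  simp only [Set.mem_setOf_eq, not_lt] at hcon
  exact ha (hz ▸ cellIdx_mem_ibox2 hcon n)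

/-- Decomposition of the measure of a set along a countable partition. -/
lemma meas_partition {γ : Type*} [MeasurableSpace γ] [MeasurableSingletonClass γ] [Countable γ]
    {f : ℂ → γ} (hf : Measurable f) {s : Finset γ} (hs : ∀ c ∉ s, μ (f ⁻¹' {c}) = 0)
    {E : Set ℂ} (hE : MeasurableSet E) : μ E = ∑ c ∈ s, μ (E ∩ f ⁻¹' {c}) := by
  have hcover : E = ⋃ c : γ, E ∩ f ⁻¹' {c} := by
    ext z; simp
  have hdisj : Pairwise (Function.onFun Disjoint fun c : γ => E ∩ f ⁻¹' {c}) := by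
    intro c c' hne
    apply Set.disjoint_left.mpr
    rintro z ⟨-, hz1⟩ ⟨-, hz2⟩
    simp only [Set.mem_preimage, Set.mem_singleton_iff] at hz1 hz2
    exact hne (hz1 ▸ hz2 ▸ rfl)
  have hmeas : ∀ c : γ, MeasurableSet (E ∩ f ⁻¹' {c}) :=
    fun c => hE.inter (hf (measurableSet_singleton c))
  conv_lhs => rw [hcover]
  rw [measure_iUnion hdisj hmeas]
  exact tsum_eq_sum fun c hc => measure_mono_null Set.inter_subset_right (hs c hc)

lemma H2_eq_sum (hsupp : μ {z | B < ‖z‖} = 0) (n : ℕ) :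
    H2 μ n = ∑ a ∈ ibox2 B n, plog (μ (cellIdx n ⁻¹' {a})).toReal := by
  unfold H2
  rw [tsum_eq_sum (s := ibox2 B n) ?_]
  · exact Finset.sum_congr rfl fun a _ => by rw [cell2_eq_preimage]
  · intro a ha
    rw [cell2_eq_preimage, mu_cellIdx_zero hsupp ha]
    simp [plog]

lemma H1_map_eq_sum (hsupp : μ {z | B < ‖z‖} = 0) {w : ℂ}
    (hw : ‖w‖ = 1) (n : ℕ) :
    H1 (μ.map (projMap w)) n = ∑ a ∈ ibox B n, plog (μ (pj1 w n ⁻¹' {a})).toReal := by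
  unfold H1
  have hmap : ∀ a : ℤ, (μ.map (projMap w)) (cell1 n a) = μ (pj1 w n ⁻¹' {a}) := by
    intro a
    rw [Measure.map_apply (measurable_projMap w) (measurableSet_cell1 n a),
      cell1_eq_preimage]
  rw [tsum_eq_sum (s := ibox B n) ?_]
  · exact Finset.sum_congr rfl fun a _ => by rw [hmap]
  · intro a ha
    rw [hmap, mu_pj1_zero hsupp hw ha]
    simp [plog]

end Support
end SSmodel
namespace SSmodel
open MeasureTheory

lemma projMap_eq_re_mul_conj (w ζ : ℂ) : projMap w ζ = (ζ * (starRingEnd ℂ) w).re := by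
  simp only [projMap, Complex.mul_re, Complex.conj_re, Complex.conj_im]
  ring

lemma projMap_sub (w z z' : ℂ) : projMap w z - projMap w z' = projMap w (z - z') := by
  simp only [projMap, Complex.sub_re, Complex.sub_im]
  ring

lemma projMap_real_mul (w : ℂ) (r : ℝ) (z : ℂ) :
    projMap w ((r : ℂ) * z) = r * projMap w z := by
  simp only [projMap, Complex.mul_re, Complex.mul_im, Complex.ofReal_re, Complex.ofReal_im]
  ring

lemma abs_sub_lt_one_of_floor_eq {x y : ℝ} (h : ⌊x⌋ = ⌊y⌋) : |x - y| < 1 := by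
  have h1 := Int.floor_le x
  have h2 := Int.lt_floor_add_one x
  have h3 := Int.floor_le y
  have h4 := Int.lt_floor_add_one y
  rw [h] at h1 h2
  rw [abs_sub_lt_iff]
  constructor <;> linarith

lemma floor_mem_Icc_of_close {x y r : ℝ} (h : |x - y| ≤ r) :
    ⌊x⌋ ∈ Finset.Icc (⌊y⌋ - (⌈r⌉+1)) (⌊y⌋ + (⌈r⌉+1)) := by
  obtain ⟨ha, hb⟩ := abs_le.mp h
  have h1 := Int.floor_le x
  have h2 := Int.lt_floor_add_one x
  have h3 := Int.floor_le y
  have h4 := Int.lt_floor_add_one y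
  have h5 := Int.le_ceil r
  rw [Finset.mem_Icc]
  constructor
  · have : ((⌊y⌋ - (⌈r⌉+1) : ℤ) : ℝ) ≤ ((⌊x⌋ : ℤ) : ℝ) := by push_cast; linarith
    exact_mod_cast this
  · have : ((⌊x⌋ : ℤ) : ℝ) ≤ ((⌊y⌋ + (⌈r⌉+1) : ℤ) : ℝ) := by push_cast; linarith
    exact_mod_cast this
  
/-- If both projections of `ζ` (in two non-parallel unit directions) are `< 1` in absolute
value, then `|ζ| ≤ 3/d` where `d` is the (sine of the) angle between the directions. -/
lemma abs_le_of_two_proj {w₁ w₂ ζ : ℂ} (hw₁ : ‖w₁‖ = 1) (hw₂ : ‖w₂‖ = 1)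
    {d : ℝ} (hd : d = |((starRingEnd ℂ) w₁ * w₂).im|) (hdpos : 0 < d)
    (h1 : |projMap w₁ ζ| < 1) (h2 : |projMap w₂ ζ| < 1) :
    ‖ζ‖ ≤ 3 / d := by
  set A := ζ * (starRingEnd ℂ) w₁ with hA
  set β := w₁ * (starRingEnd ℂ) w₂ with hβ
  have habsA : ‖A‖ = ‖ζ‖ := by
    rw [hA, norm_mul, Complex.norm_conj, hw₁, mul_one]
  have habsβ : ‖β‖ = 1 := by
    rw [hβ, norm_mul, Complex.norm_conj, hw₁, hw₂, one_mul]
  have hconj1 : (starRingEnd ℂ) w₁ * w₁ = 1 := by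
    rw [mul_comm, Complex.mul_conj]
    norm_cast
    rw [Complex.normSq_eq_norm_sq, hw₁, one_pow]
  have hkey : ζ * (starRingEnd ℂ) w₂ = A * β := by
    calc ζ * (starRingEnd ℂ) w₂ = ζ * ((starRingEnd ℂ) w₁ * w₁) * (starRingEnd ℂ) w₂ := by
          rw [hconj1, mul_one]
      _ = A * β := by rw [hA, hβ]; ring
  have hβim : |β.im| = d := by
    have : β = (starRingEnd ℂ) ((starRingEnd ℂ) w₁ * w₂) := by
      rw [map_mul, Complex.conj_conj]
    rw [this, Complex.conj_im, abs_neg, hd]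
  have hReA : |A.re| < 1 := by rw [← projMap_eq_re_mul_conj]; exact h1
  have hP2 : projMap w₂ ζ = A.re * β.re - A.im * β.im := by
    rw [projMap_eq_re_mul_conj, hkey, Complex.mul_re]
  have hβre : |β.re| ≤ 1 := habsβ ▸ Complex.abs_re_le_norm β
  have hAim : |A.im| * d ≤ 2 := by
    have e : A.im * β.im = A.re * β.re - projMap w₂ ζ := by rw [hP2]; ring
    have : |A.im * β.im| ≤ |A.re * β.re| + |projMap w₂ ζ| := by
      rw [e]; exact abs_sub _ _
    rw [abs_mul, hβim] at this
    rw [abs_mul] at this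
    nlinarith [abs_nonneg A.re, abs_nonneg β.re, abs_nonneg (projMap w₂ ζ)]
  have hd1 : d ≤ 1 := by
    rw [← hβim]
    exact habsβ ▸ Complex.abs_im_le_norm β
  have habs : ‖ζ‖ ≤ |A.re| + |A.im| :=
    habsA ▸ Complex.norm_le_abs_re_add_abs_im A
  have hAim2 : |A.im| ≤ 2 / d := by
    rw [le_div_iff₀ hdpos]
    exact hAim
  have h3 : (1:ℝ) ≤ 1 / d := by
    rw [le_div_iff₀ hdpos]; linarith
  calc ‖ζ‖ ≤ |A.re| + |A.im| := habs
    _ ≤ 1 + 2/d := by linarith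
    _ ≤ 3/d := by
        have : 3/d = 1/d + 2/d := by ring
        linarith

end SSmodel
namespace SSmodel
open MeasureTheory

lemma nonempty_of_toReal_ne_zero {μ : Measure ℂ} {S : Set ℂ} (h : (μ S).toReal ≠ 0) :
    S.Nonempty := by
  rcases Set.eq_empty_or_nonempty S with he | hne
  · rw [he] at h; simp at h
  · exact hne

theorem two_proj_entropy {μ : Measure ℂ} [IsProbabilityMeasure μ] {B : ℝ}
    (hsupp : μ {z | B < ‖z‖} = 0)
    {w₁ w₂ : ℂ} (hw₁ : ‖w₁‖ = 1) (hw₂ : ‖w₂‖ = 1)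
    {d : ℝ} (hd : d = |((starRingEnd ℂ) w₁ * w₂).im|) (hdpos : 0 < d) (n : ℕ) :
    H2 μ n ≤ H1 (μ.map (projMap w₁)) n + H1 (μ.map (projMap w₂)) n
      + 2 * Real.logb 2 (6/d + 5) := by
  classical
  set J : ℂ → ℤ × ℤ := fun z => (pj1 w₁ n z, pj1 w₂ n z) with hJ
  have hJmeas : Measurable J := (measurable_pj1 w₁ n).prod (measurable_pj1 w₂ n)
  have hJsplit : ∀ ab : ℤ × ℤ, J ⁻¹' {ab} = pj1 w₁ n ⁻¹' {ab.1} ∩ pj1 w₂ n ⁻¹' {ab.2} := by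
    intro ab; ext z
    simp [hJ, Prod.ext_iff]
  have hqzero : ∀ ab : ℤ × ℤ, ab ∉ ibox2 B n → μ (J ⁻¹' {ab}) = 0 := by
    intro ab hab
    rw [ibox2, Finset.mem_product] at hab
    push_neg at hab
    by_cases h1 : ab.1 ∈ ibox B n
    · exact measure_mono_null
        (by rw [hJsplit]; exact Set.inter_subset_right) (mu_pj1_zero hsupp hw₂ (hab h1))
    · exact measure_mono_null
        (by rw [hJsplit]; exact Set.inter_subset_left) (mu_pj1_zero hsupp hw₁ h1)
  set F : ℤ × ℤ → ℝ := fun ab => (μ (J ⁻¹' {ab})).toReal with hF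
  have hFnn : ∀ ab, 0 ≤ F ab := fun ab => ENNReal.toReal_nonneg
  have hrow : ∀ a : ℤ, (μ (pj1 w₁ n ⁻¹' {a})).toReal = ∑ b ∈ ibox B n, F (a, b) := by
    intro a
    rw [meas_partition (μ := μ) (measurable_pj1 w₂ n)
      (fun c hc => mu_pj1_zero hsupp hw₂ hc)
      ((measurable_pj1 w₁ n) (measurableSet_singleton a)),
      ENNReal.toReal_sum (fun b _ => measure_ne_top μ _)]
    refine Finset.sum_congr rfl fun b _ => ?_
    rw [hF]; congr 1
    rw [hJsplit]
  have hcol : ∀ bb : ℤ, (μ (pj1 w₂ n ⁻¹' {bb})).toReal = ∑ a ∈ ibox B n, F (a, bb) := by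
    intro bb
    rw [meas_partition (μ := μ) (measurable_pj1 w₁ n)
      (fun c hc => mu_pj1_zero hsupp hw₁ hc)
      ((measurable_pj1 w₂ n) (measurableSet_singleton bb)),
      ENNReal.toReal_sum (fun a _ => measure_ne_top μ _)]
    refine Finset.sum_congr rfl fun a _ => ?_
    rw [hF]; congr 1
    rw [hJsplit, Set.inter_comm]
  have htot : ∑ ab ∈ ibox2 B n, F ab = 1 := by
    have h0 := meas_partition (μ := μ) hJmeas hqzero MeasurableSet.univ
    simp only [Set.univ_inter, measure_univ] at h0
    calc ∑ ab ∈ ibox2 B n, F ab = (∑ ab ∈ ibox2 B n, μ (J ⁻¹' {ab})).toReal := by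
          rw [ENNReal.toReal_sum (fun ab _ => measure_ne_top μ _)]
      _ = (1 : ℝ≥0∞).toReal := by rw [← h0]
      _ = 1 := by simp
  have htot2 : ∑ a ∈ ibox B n, ∑ b ∈ ibox B n, F (a, b) = 1 := by
    rw [← Finset.sum_product]
    exact htot
  have step1 : ∑ a ∈ ibox B n, ∑ b ∈ ibox B n, plog (F (a, b)) ≤
      H1 (μ.map (projMap w₁)) n + H1 (μ.map (projMap w₂)) n := by
    have hg := gibbs_subadd (ibox B n) (ibox B n) (fun a b => F (a, b))
      (fun a _ b _ => hFnn _) (le_of_eq htot2)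
    rw [H1_map_eq_sum hsupp hw₁ n, H1_map_eq_sum hsupp hw₂ n]
    refine hg.trans (le_of_eq ?_)
    congr 1
    · refine Finset.sum_congr rfl fun a _ => ?_
      rw [hrow a]
    · refine Finset.sum_congr rfl fun b _ => ?_
      rw [hcol b]
  -- counting side
  set G : ℤ × ℤ → ℤ × ℤ → ℝ := fun ab c => (μ (J ⁻¹' {ab} ∩ cellIdx n ⁻¹' {c})).toReal with hG
  have hGnn : ∀ ab c, 0 ≤ G ab c := fun _ _ => ENNReal.toReal_nonneg
  have hcell : ∀ c : ℤ × ℤ, (μ (cellIdx n ⁻¹' {c})).toReal = ∑ ab ∈ ibox2 B n, G ab c := by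
    intro c
    rw [meas_partition (μ := μ) hJmeas hqzero
      ((measurable_cellIdx n) (measurableSet_singleton c)),
      ENNReal.toReal_sum (fun ab _ => measure_ne_top μ _)]
    refine Finset.sum_congr rfl fun ab _ => ?_
    rw [hG]; congr 1
    rw [Set.inter_comm]
  have hqsum : ∀ ab : ℤ × ℤ, ∑ c ∈ ibox2 B n, G ab c = F ab := by
    intro ab
    show (∑ c ∈ ibox2 B n, (μ (J ⁻¹' {ab} ∩ cellIdx n ⁻¹' {c})).toReal)
        = (μ (J ⁻¹' {ab})).toReal
    rw [meas_partition (μ := μ) (measurable_cellIdx n)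
      (fun c hc => mu_cellIdx_zero hsupp hc) (hJmeas (measurableSet_singleton ab)),
      ENNReal.toReal_sum (fun c _ => measure_ne_top μ _)]
  have hK1 : (1:ℝ) ≤ 6/d + 5 := by
    have : 0 < 6/d := by positivity
    linarith
  have hcard : ∀ ab : ℤ × ℤ, Real.logb 2 (((ibox2 B n).filter fun c => G ab c ≠ 0).card)
      ≤ 2 * Real.logb 2 (6/d + 5) := by
    intro ab
    rcases ((ibox2 B n).filter fun c => G ab c ≠ 0).eq_empty_or_nonempty with he | hne
    · rw [he]
      simp only [Finset.card_empty, Nat.cast_zero, Real.logb_zero]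
      exact mul_nonneg (by norm_num) (Real.logb_nonneg one_lt_two hK1)
    · obtain ⟨c₀, hc₀⟩ := hne
      have hz₀ : (J ⁻¹' {ab} ∩ cellIdx n ⁻¹' {c₀}).Nonempty :=
        nonempty_of_toReal_ne_zero (Finset.mem_filter.mp hc₀).2
      obtain ⟨z₀, hz₀J, hz₀c⟩ := hz₀
      simp only [Set.mem_preimage, Set.mem_singleton_iff] at hz₀J hz₀c
      set M : ℤ := ⌈(3:ℝ)/d⌉ + 1 with hM
      have hMle : ((2*M+1 : ℤ) : ℝ) ≤ 6/d + 5 := by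
        have := Int.ceil_lt_add_one ((3:ℝ)/d)
        push_cast [hM]
        have e : (6:ℝ)/d = 2*(3/d) := by ring
        rw [e]
        linarith
      have hM0 : (0:ℤ) ≤ 2*M+1 := by
        have : (0:ℤ) < ⌈(3:ℝ)/d⌉ := Int.ceil_pos.mpr (by positivity)
        omega
      have hsubset : ((ibox2 B n).filter fun c => G ab c ≠ 0) ⊆
          Finset.Icc (c₀.1 - M) (c₀.1 + M) ×ˢ Finset.Icc (c₀.2 - M) (c₀.2 + M) := by
        intro c hc
        obtain ⟨z, hzmem⟩ := nonempty_of_toReal_ne_zero (Finset.mem_filter.mp hc).2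
        obtain ⟨hzJ, hzc⟩ := hzmem
        simp only [Set.mem_preimage, Set.mem_singleton_iff] at hzJ hzc
        have hp : ∀ w : ℂ, pj1 w n z = pj1 w n z₀ →
            |projMap w ((((2:ℝ)^n : ℝ) : ℂ) * (z - z₀))| < 1 := by
          intro w he
          rw [projMap_real_mul, ← projMap_sub, mul_sub]
          exact abs_sub_lt_one_of_floor_eq he
        have hp1 := hp w₁ (by
          have e1 : pj1 w₁ n z = ab.1 := congrArg Prod.fst hzJ
          have e2 : pj1 w₁ n z₀ = ab.1 := congrArg Prod.fst hz₀J
          rw [e1, e2])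
        have hp2 := hp w₂ (by
          have e1 : pj1 w₂ n z = ab.2 := congrArg Prod.snd hzJ
          have e2 : pj1 w₂ n z₀ = ab.2 := congrArg Prod.snd hz₀J
          rw [e1, e2])
        have hζ := abs_le_of_two_proj hw₁ hw₂ hd hdpos hp1 hp2
        have hre : |(2:ℝ)^n * z.re - (2:ℝ)^n * z₀.re| ≤ 3/d := by
          have e : (2:ℝ)^n * z.re - (2:ℝ)^n * z₀.re
              = ((((2:ℝ)^n : ℝ) : ℂ) * (z - z₀)).re := by
            simp only [Complex.mul_re, Complex.sub_re, Complex.sub_im,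
              Complex.ofReal_re, Complex.ofReal_im]
            ring
          rw [e]
          exact le_trans (Complex.abs_re_le_norm _) hζ
        have him : |(2:ℝ)^n * z.im - (2:ℝ)^n * z₀.im| ≤ 3/d := by
          have e : (2:ℝ)^n * z.im - (2:ℝ)^n * z₀.im
              = ((((2:ℝ)^n : ℝ) : ℂ) * (z - z₀)).im := by
            simp only [Complex.mul_im, Complex.sub_re, Complex.sub_im,
              Complex.ofReal_re, Complex.ofReal_im]
            ring
          rw [e]
          exact le_trans (Complex.abs_im_le_norm _) hζ
        have hc1 : c.1 = ⌊(2:ℝ)^n * z.re⌋ := (congrArg Prod.fst hzc).symm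
        have hc2 : c.2 = ⌊(2:ℝ)^n * z.im⌋ := (congrArg Prod.snd hzc).symm
        have hc01 : c₀.1 = ⌊(2:ℝ)^n * z₀.re⌋ := (congrArg Prod.fst hz₀c).symm
        have hc02 : c₀.2 = ⌊(2:ℝ)^n * z₀.im⌋ := (congrArg Prod.snd hz₀c).symm
        apply Finset.mem_product.mpr
        constructor
        · rw [hc1, hc01, hM]
          exact floor_mem_Icc_of_close hre
        · rw [hc2, hc02, hM]
          exact floor_mem_Icc_of_close him
      have hcardle : ((((ibox2 B n).filter fun c => G ab c ≠ 0).card : ℕ) : ℝ)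
          ≤ (6/d+5)^2 := by
        have h1 := Finset.card_le_card hsubset
        have h2 : (Finset.Icc (c₀.1 - M) (c₀.1 + M) ×ˢ Finset.Icc (c₀.2 - M) (c₀.2 + M)).card
            = ((2*M+1).toNat) * ((2*M+1).toNat) := by
          rw [Finset.card_product, Int.card_Icc, Int.card_Icc]
          congr 2 <;> ring_nf
        have h3 : (((2*M+1).toNat : ℕ) : ℝ) ≤ 6/d + 5 := by
          calc (((2*M+1).toNat : ℕ) : ℝ) = ((((2*M+1).toNat : ℕ) : ℤ) : ℝ) := by push_cast; ring
            _ = ((2*M+1 : ℤ) : ℝ) := by rw [Int.toNat_of_nonneg hM0]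
            _ ≤ 6/d+5 := hMle
        calc ((((ibox2 B n).filter fun c => G ab c ≠ 0).card : ℕ) : ℝ)
            ≤ (((2*M+1).toNat * (2*M+1).toNat : ℕ) : ℝ) := by
              exact_mod_cast h2 ▸ h1
          _ = (((2*M+1).toNat : ℕ) : ℝ) * (((2*M+1).toNat : ℕ) : ℝ) := by push_cast; ring
          _ ≤ (6/d+5)^2 := by nlinarith [Nat.cast_nonneg (α := ℝ) (2*M+1).toNat]
      have hpos : (0:ℝ) < (((ibox2 B n).filter fun c => G ab c ≠ 0).card : ℝ) := by
        have := Finset.card_pos.mpr ⟨c₀, hc₀⟩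
        exact_mod_cast this
      calc Real.logb 2 (((ibox2 B n).filter fun c => G ab c ≠ 0).card)
          ≤ Real.logb 2 ((6/d+5)^2) := Real.logb_le_logb_of_le one_lt_two hpos hcardle
        _ = 2 * Real.logb 2 (6/d+5) := by
            rw [Real.logb_pow]
            norm_num
  have step2 : H2 μ n ≤ (∑ ab ∈ ibox2 B n, plog (F ab)) + 2 * Real.logb 2 (6/d + 5) := by
    rw [H2_eq_sum hsupp n]
    calc ∑ c ∈ ibox2 B n, plog ((μ (cellIdx n ⁻¹' {c})).toReal)
        ≤ ∑ c ∈ ibox2 B n, ∑ ab ∈ ibox2 B n, plog (G ab c) := by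
          refine Finset.sum_le_sum fun c _ => ?_
          rw [hcell c]
          exact plog_sum_le _ _ (fun ab _ => hGnn ab c)
      _ = ∑ ab ∈ ibox2 B n, ∑ c ∈ ibox2 B n, plog (G ab c) := Finset.sum_comm
      _ ≤ ∑ ab ∈ ibox2 B n, (plog (F ab) + F ab * (2 * Real.logb 2 (6/d+5))) := by
          refine Finset.sum_le_sum fun ab _ => ?_
          have h := sum_plog_le_card (ibox2 B n) (fun c => G ab c) (fun c _ => hGnn ab c)
          rw [hqsum ab] at h
          refine h.trans ?_
          have h2 := hcard ab
          nlinarith [hFnn ab]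
      _ = (∑ ab ∈ ibox2 B n, plog (F ab)) + 2 * Real.logb 2 (6/d + 5) := by
          rw [Finset.sum_add_distrib, ← Finset.sum_mul, htot, one_mul]
  have hsp : ∑ ab ∈ ibox2 B n, plog (F ab)
      = ∑ a ∈ ibox B n, ∑ b ∈ ibox B n, plog (F (a, b)) := by
    rw [ibox2, Finset.sum_product]
  linarith [step1, step2, le_of_eq hsp]

end SSmodel
namespace SSmodel
open MeasureTheory Filter

lemma le_plog_of_le {m t c : ℝ} (hm0 : 0 ≤ m) (hmt : m ≤ t) (ht : 0 < t)
    (hlog : Real.logb 2 t ≤ -c) : m * c ≤ plog m := by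
  rcases hm0.eq_or_lt with h | hm
  · simp [← h, plog_zero]
  have h1 : Real.logb 2 m ≤ -c :=
    le_trans (Real.logb_le_logb_of_le one_lt_two hm hmt) hlog
  have h2 := mul_le_mul_of_nonneg_left h1 hm0
  simp only [plog]
  nlinarith

lemma dyadicCellOf_subset_ball (n : ℕ) (x : ℂ) :
    dyadicCellOf n x ⊆ Metric.closedBall x (2 * (1/2)^n) := by
  intro z hz
  have hz' : cellIdx n z = cellIdx n x := by
    rw [dyadicCellOf, cell2_eq_preimage] at hz
    exact hz
  have h2n : (0:ℝ) < (2:ℝ)^n := by positivity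
  have h1 : |(2:ℝ)^n * z.re - (2:ℝ)^n * x.re| < 1 :=
    abs_sub_lt_one_of_floor_eq (congrArg Prod.fst hz')
  have h2 : |(2:ℝ)^n * z.im - (2:ℝ)^n * x.im| < 1 :=
    abs_sub_lt_one_of_floor_eq (congrArg Prod.snd hz')
  have hre : |z.re - x.re| ≤ (1/2:ℝ)^n := by
    have e : (2:ℝ)^n * z.re - (2:ℝ)^n * x.re = (2:ℝ)^n * (z.re - x.re) := by ring
    rw [e, abs_mul, abs_of_pos h2n] at h1
    rw [div_pow, one_pow, le_div_iff₀ h2n]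
    linarith
  have him : |z.im - x.im| ≤ (1/2:ℝ)^n := by
    have e : (2:ℝ)^n * z.im - (2:ℝ)^n * x.im = (2:ℝ)^n * (z.im - x.im) := by ring
    rw [e, abs_mul, abs_of_pos h2n] at h2
    rw [div_pow, one_pow, le_div_iff₀ h2n]
    linarith
  rw [Metric.mem_closedBall, Complex.dist_eq]
  calc ‖z - x‖ ≤ |(z-x).re| + |(z-x).im| := Complex.norm_le_abs_re_add_abs_im _
    _ = |z.re - x.re| + |z.im - x.im| := by rw [Complex.sub_re, Complex.sub_im]
    _ ≤ (1/2:ℝ)^n + (1/2:ℝ)^n := add_le_add hre him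
    _ = 2 * (1/2)^n := by ring

theorem entropy_lower {μ : Measure ℂ} [IsProbabilityMeasure μ] {B : ℝ}
    (hsupp : μ {z | B < ‖z‖} = 0)
    {α ε : ℝ} (hα1 : 1 ≤ α) (hα2 : α ≤ 2) (hε : 0 < ε) (hε1 : ε ≤ 1/8)
    (hdim : ∀ᵐ x ∂μ, Filter.Tendsto
      (fun r : ℝ => Real.log (μ (Metric.closedBall x r)).toReal / Real.log r)
      (nhdsWithin 0 (Set.Ioi 0)) (nhds α)) :
    ∀ᶠ n : ℕ in Filter.atTop, (α - 3*ε) * n ≤ H2 μ n := by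
  classical
  set Gst : ℕ → Set ℂ := fun N => {x | ∀ n : ℕ, N ≤ n →
    (μ (dyadicCellOf n x)).toReal ≤ (2 * (1/2:ℝ)^n) ^ (α - ε)} with hGst
  have hmeasCell : ∀ n : ℕ, Measurable fun x : ℂ => (μ (dyadicCellOf n x)).toReal := by
    intro n
    have e : (fun x : ℂ => (μ (dyadicCellOf n x)).toReal)
        = (fun a : ℤ×ℤ => (μ (cell2 n a)).toReal) ∘ cellIdx n := rfl
    rw [e]
    exact (measurable_of_countable _).comp (measurable_cellIdx n)
  have hmeasG : ∀ N, MeasurableSet (Gst N) := by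
    intro N
    have e : Gst N = ⋂ (n : ℕ), ⋂ (_ : N ≤ n),
        {x | (μ (dyadicCellOf n x)).toReal ≤ (2 * (1/2:ℝ)^n) ^ (α - ε)} := by
      ext x; simp [hGst]
    rw [e]
    exact MeasurableSet.iInter fun n => MeasurableSet.iInter fun _ =>
      measurableSet_le (hmeasCell n) measurable_const
  -- a.e. x belongs to some Gst N
  have hae : ∀ᵐ x ∂μ, ∃ N : ℕ, x ∈ Gst N := by
    filter_upwards [hdim] with x hx
    have hball : ∀ r : ℝ, 0 < r → μ (Metric.closedBall x r) ≠ 0 := by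
      intro r hr hzero
      have hev : ∀ᶠ s in nhdsWithin (0:ℝ) (Set.Ioi 0),
          Real.log (μ (Metric.closedBall x s)).toReal / Real.log s = 0 := by
        filter_upwards [Ioc_mem_nhdsGT_of_mem (Set.mem_Ico.mpr ⟨le_refl (0:ℝ), hr⟩)]
          with s hs
        have h0 : μ (Metric.closedBall x s) = 0 :=
          measure_mono_null (Metric.closedBall_subset_closedBall hs.2) hzero
        rw [h0]; simp
      have h1 : Filter.Tendsto (fun _ : ℝ => (0:ℝ)) (nhdsWithin 0 (Set.Ioi 0)) (nhds α) :=
        hx.congr' (hev.mono fun s hs => hs)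
      have h2 := tendsto_nhds_unique h1 tendsto_const_nhds
      linarith
    have hrr0 : Filter.Tendsto (fun n : ℕ => 2 * (1/2:ℝ)^n) Filter.atTop (nhds 0) := by
      have h := tendsto_pow_atTop_nhds_zero_of_lt_one
        (by norm_num : (0:ℝ) ≤ 1/2) (by norm_num : (1/2:ℝ) < 1)
      simpa using h.const_mul 2
    have hrrpos : ∀ n : ℕ, (0:ℝ) < 2 * (1/2:ℝ)^n := fun n => by positivity
    have hcomp : Filter.Tendsto (fun n : ℕ =>
        Real.log (μ (Metric.closedBall x (2 * (1/2:ℝ)^n))).toReal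
          / Real.log (2 * (1/2:ℝ)^n)) Filter.atTop (nhds α) := by
      apply hx.comp
      apply tendsto_nhdsWithin_of_tendsto_nhds_of_eventually_within _ hrr0
      exact Filter.Eventually.of_forall fun n => hrrpos n
    have hev1 := hcomp.eventually (eventually_gt_nhds (by linarith : α - ε < α))
    have hev2 := hrr0.eventually (eventually_lt_nhds (by norm_num : (0:ℝ) < 1))
    obtain ⟨N, hN⟩ := (hev1.and hev2).exists_forall_of_atTop
    refine ⟨N, fun n hn => ?_⟩
    obtain ⟨hgt, hlt1⟩ := hN n hn
    set r : ℝ := 2 * (1/2:ℝ)^n with hr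
    have hrpos : 0 < r := hrrpos n
    have hmB : 0 < (μ (Metric.closedBall x r)).toReal :=
      ENNReal.toReal_pos (hball r hrpos) (measure_ne_top μ _)
    have hlogr : Real.log r < 0 := Real.log_neg hrpos hlt1
    have hlogm : Real.log (μ (Metric.closedBall x r)).toReal < (α - ε) * Real.log r := by
      have h3 := mul_lt_mul_of_neg_right hgt hlogr
      rwa [div_mul_cancel₀ _ (ne_of_lt hlogr)] at h3
    have hmain : (μ (Metric.closedBall x r)).toReal ≤ r ^ (α - ε) := by
      have h4 : Real.log (μ (Metric.closedBall x r)).toReal < Real.log (r ^ (α - ε)) := by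
        rw [Real.log_rpow hrpos]
        exact hlogm
      exact le_of_lt ((Real.log_lt_log_iff hmB (Real.rpow_pos_of_pos hrpos _)).mp h4)
    calc (μ (dyadicCellOf n x)).toReal
        ≤ (μ (Metric.closedBall x r)).toReal :=
          ENNReal.toReal_mono (measure_ne_top μ _)
            (measure_mono (dyadicCellOf_subset_ball n x))
      _ ≤ r ^ (α - ε) := hmain
  -- choose N with large measure
  have hmono : Monotone Gst := by
    intro N N' h x hx n hn
    exact hx n (le_trans h hn)
  have hcup : μ (⋃ N, Gst N) = 1 := by
    rw [← prob_compl_eq_zero_iff (MeasurableSet.iUnion hmeasG)]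
    have h0 : ∀ᵐ x ∂μ, x ∈ ⋃ N, Gst N :=
      hae.mono fun x ⟨N, hN⟩ => Set.mem_iUnion.mpr ⟨N, hN⟩
    exact ae_iff.mp h0
  have hexN : ∃ N, 1 - ENNReal.ofReal (ε/2) < μ (Gst N) := by
    have hlt : (1 : ℝ≥0∞) - ENNReal.ofReal (ε/2) < 1 :=
      ENNReal.sub_lt_self ENNReal.one_ne_top one_ne_zero
        (by simp [ENNReal.ofReal_eq_zero]; linarith)
    have hlt2 : (1 : ℝ≥0∞) - ENNReal.ofReal (ε/2) < ⨆ N, μ (Gst N) := by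
      rw [← hmono.measure_iUnion, hcup]
      exact hlt
    exact lt_iSup_iff.mp hlt2
  obtain ⟨N, hN⟩ := hexN
  have hNr : 1 - ε/2 ≤ (μ (Gst N)).toReal := by
    have h5 := ENNReal.toReal_mono (measure_ne_top μ _) hN.le
    rw [ENNReal.toReal_sub_of_le (by
        calc ENNReal.ofReal (ε/2) ≤ ENNReal.ofReal 1 := by
              apply ENNReal.ofReal_le_ofReal; linarith
          _ = 1 := ENNReal.ofReal_one) ENNReal.one_ne_top] at h5
    rw [ENNReal.toReal_ofReal (by linarith)] at h5
    simpa using h5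
  -- arithmetic eventuality
  have hev3 : ∀ᶠ n : ℕ in atTop, α - ε ≤ ε * n := by
    have ht : Filter.Tendsto (fun n : ℕ => ε * n) atTop atTop :=
      Filter.Tendsto.const_mul_atTop hε tendsto_natCast_atTop_atTop
    exact ht.eventually_ge_atTop (α - ε)
  filter_upwards [eventually_ge_atTop N, eventually_ge_atTop 1, hev3] with n hnN hn1 hn3
  have hn1' : (1:ℝ) ≤ (n:ℝ) := by exact_mod_cast hn1
  set T := (ibox2 B n).filter (fun a => (cell2 n a ∩ Gst N).Nonempty) with hT
  have hcellbound : ∀ a ∈ T, (μ (cellIdx n ⁻¹' {a})).toReal ≤ (2*(1/2:ℝ)^n)^(α - ε) := by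
    intro a ha
    obtain ⟨x, hx1, hx2⟩ := (Finset.mem_filter.mp ha).2
    have he : cellIdx n x = a := by
      rw [cell2_eq_preimage] at hx1
      exact hx1
    rw [← he, ← cell2_eq_preimage]
    exact hx2 n hnN
  have hc2 : (0:ℝ) ≤ (α - 2*ε) * n := by nlinarith
  have hplog : ∀ a ∈ T, ((μ (cellIdx n ⁻¹' {a})).toReal) * ((α - 2*ε) * n)
      ≤ plog ((μ (cellIdx n ⁻¹' {a})).toReal) := by
    intro a ha
    apply le_plog_of_le ENNReal.toReal_nonneg (hcellbound a ha) (by positivity)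
    have hb : Real.logb 2 ((2*(1/2:ℝ)^n)^(α-ε)) = (α-ε) * (1 - n) := by
      rw [Real.logb_rpow_eq_mul_logb_of_pos (by positivity)]
      congr 1
      have e1 : (2*(1/2:ℝ)^n) = 2 * ((2:ℝ)^n)⁻¹ := by
        rw [div_pow, one_pow]
        rw [div_eq_mul_inv, one_mul]
      rw [e1, Real.logb_mul (by norm_num) (by positivity),
        Real.logb_inv, Real.logb_self_eq_one one_lt_two, Real.logb_pow,
        Real.logb_self_eq_one one_lt_two]
      ring
    rw [hb]
    have e2 : (α-ε) * (1 - (n:ℝ)) + (α - 2*ε) * n = (α-ε) - ε*n := by ring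
    linarith
  have hsum_lb : 1 - ε/2 ≤ ∑ a ∈ T, (μ (cellIdx n ⁻¹' {a})).toReal := by
    have hpart := meas_partition (μ := μ) (measurable_cellIdx n)
      (fun c hc => mu_cellIdx_zero hsupp hc) (hmeasG N)
    have hvanish : ∀ a ∈ ibox2 B n, a ∉ T → μ (Gst N ∩ cellIdx n ⁻¹' {a}) = 0 := by
      intro a ha haT
      have hemp : cell2 n a ∩ Gst N = ∅ := by
        by_contra hne
        exact haT (Finset.mem_filter.mpr ⟨ha, Set.nonempty_iff_ne_empty.mpr hne⟩)
      have hemp2 : Gst N ∩ cellIdx n ⁻¹' {a} = ∅ := by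
        rw [← cell2_eq_preimage, Set.inter_comm]
        exact hemp
      rw [hemp2]
      exact measure_empty
    calc 1 - ε/2 ≤ (μ (Gst N)).toReal := hNr
      _ = ∑ a ∈ ibox2 B n, (μ (Gst N ∩ cellIdx n ⁻¹' {a})).toReal := by
          rw [hpart, ENNReal.toReal_sum (fun a _ => measure_ne_top μ _)]
      _ = ∑ a ∈ T, (μ (Gst N ∩ cellIdx n ⁻¹' {a})).toReal := by
          refine (Finset.sum_subset (Finset.filter_subset _ _) ?_).symm
          intro a ha haT
          rw [hvanish a ha haT]
          simp
      _ ≤ ∑ a ∈ T, (μ (cellIdx n ⁻¹' {a})).toReal := by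
          refine Finset.sum_le_sum fun a _ => ?_
          exact ENNReal.toReal_mono (measure_ne_top μ _)
            (measure_mono Set.inter_subset_right)
  calc (α - 3*ε) * n ≤ ((α - 2*ε) * n) * (1 - ε/2) := by nlinarith
    _ ≤ ((α - 2*ε) * n) * (∑ a ∈ T, (μ (cellIdx n ⁻¹' {a})).toReal) :=
        mul_le_mul_of_nonneg_left hsum_lb hc2
    _ = ∑ a ∈ T, ((μ (cellIdx n ⁻¹' {a})).toReal) * ((α - 2*ε) * n) := by
        rw [Finset.mul_sum]
        exact Finset.sum_congr rfl fun a _ => by ring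
    _ ≤ ∑ a ∈ T, plog ((μ (cellIdx n ⁻¹' {a})).toReal) := Finset.sum_le_sum hplog
    _ ≤ ∑ a ∈ ibox2 B n, plog ((μ (cellIdx n ⁻¹' {a})).toReal) := by
        refine Finset.sum_le_sum_of_subset_of_nonneg (Finset.filter_subset _ _)
          fun a _ _ => plog_nonneg ENNReal.toReal_nonneg ?_
        have h6 := ENNReal.toReal_mono ENNReal.one_ne_top (prob_le_one (μ := μ) (s := cellIdx n ⁻¹' {a}))
        simpa using h6
    _ = H2 μ n := (H2_eq_sum hsupp n).symm

end SSmodel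
namespace SSmodel
open MeasureTheory Filter

lemma lineDir_sq {u : ℂ} (hu : ‖u‖ = 1) : (lineDir u)^2 = u := by
  have hne : u ≠ 0 := by
    intro h
    rw [h] at hu
    simp at hu
  rw [lineDir, sq, ← Complex.exp_add]
  have e : Complex.log u / 2 + Complex.log u / 2 = Complex.log u := by ring
  rw [e, Complex.exp_log hne]

lemma lineDir_abs {u : ℂ} (hu : ‖u‖ = 1) : ‖lineDir u‖ = 1 := by
  have h := congrArg (‖·‖) (lineDir_sq hu)
  rw [norm_pow, hu, sq] at h
  rcases mul_self_eq_one_iff.mp h with h1 | h1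
  · exact h1
  · have := norm_nonneg (lineDir u)
    linarith [this, h1.le, h1.ge]

lemma abs_sub_eq_two_mul_im {u₁ u₂ : ℂ} (h₁ : ‖u₁‖ = 1) (h₂ : ‖u₂‖ = 1) :
    ‖u₁ - u₂‖
      = 2 * |((starRingEnd ℂ) (lineDir u₁) * lineDir u₂).im| := by
  set w₁ := lineDir u₁ with hw₁def
  set w₂ := lineDir u₂ with hw₂def
  set w := (starRingEnd ℂ) w₁ * w₂ with hw
  have hw₁ : ‖w₁‖ = 1 := lineDir_abs h₁
  have hw₂ : ‖w₂‖ = 1 := lineDir_abs h₂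
  have habsw : ‖w‖ = 1 := by
    rw [hw, norm_mul, Complex.norm_conj, hw₁, hw₂, one_mul]
  have hsq : w^2 = (starRingEnd ℂ) u₁ * u₂ := by
    rw [hw, mul_pow, ← map_pow, hw₁def, hw₂def, lineDir_sq h₁, lineDir_sq h₂]
  have hconj : w * (starRingEnd ℂ) w = 1 := by
    rw [Complex.mul_conj]
    norm_cast
    rw [Complex.normSq_eq_norm_sq, habsw, one_pow]
  have hu1 : u₁ * (starRingEnd ℂ) u₁ = 1 := by
    rw [Complex.mul_conj]
    norm_cast
    rw [Complex.normSq_eq_norm_sq, h₁, one_pow]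
  have key : u₁ - u₂ = u₁ * (w * ((starRingEnd ℂ) w - w)) := by
    have e1 : w * ((starRingEnd ℂ) w - w) = 1 - w^2 := by
      rw [mul_sub, hconj, ← sq]
    rw [e1, hsq, mul_sub, mul_one, ← mul_assoc, hu1, one_mul]
  have e2 : (starRingEnd ℂ) w - w = ((-(2 * w.im) : ℝ) : ℂ) * Complex.I := by
    apply Complex.ext <;>
      simp [Complex.sub_re, Complex.sub_im, Complex.conj_re, Complex.conj_im,
        Complex.mul_re, Complex.mul_im, Complex.I_re, Complex.I_im,
        Complex.ofReal_re, Complex.ofReal_im] <;> ring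
  rw [key, norm_mul, norm_mul, h₁, one_mul, habsw, one_mul, e2, norm_mul,
    Complex.norm_real, Real.norm_eq_abs, Complex.norm_I, mul_one, abs_neg, abs_mul, abs_two]

section ModelFacts

variable {I : Type} [Fintype I] [MeasurableSpace I] (M : PlanarModel I)

lemma rotPt_abs (i : I) : ‖M.rotPt i‖ = 1 := by
  rw [PlanarModel.rotPt, norm_pow, norm_div, Complex.norm_real, Real.norm_eq_abs,
    abs_of_nonneg (norm_nonneg _),
    div_self (norm_ne_zero_iff.mpr (M.lam_ne i)), one_pow]

lemma rotPt_ne_one {i : I} (him : (M.lam i).im ≠ 0) : M.rotPt i ≠ 1 := by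
  intro h
  rw [PlanarModel.rotPt, sq] at h
  have habs : ((‖M.lam i‖ : ℝ) : ℂ) ≠ 0 := by
    exact_mod_cast norm_ne_zero_iff.mpr (M.lam_ne i)
  rcases mul_self_eq_one_iff.mp h with h1 | h1 <;>
  · rw [div_eq_iff habs] at h1
    apply him
    rw [h1]
    simp

lemma mem_rotClosure_abs {g : ℂ} (hg : g ∈ Submonoid.closure M.rotGens) :
    ‖g‖ = 1 := by
  induction hg using Submonoid.closure_induction with
  | mem x hx =>
      obtain ⟨i, hi⟩ := hx
      rcases hi with h | h <;> rw [h]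
      · exact rotPt_abs M i
      · rw [Complex.norm_conj]
        exact rotPt_abs M i
  | one => simp
  | mul x y hx hy ihx ihy => rw [norm_mul, ihx, ihy, one_mul]

lemma orbitClosure_subset_sphere {v : ℂ} (hv : ‖v‖ = 1) :
    M.orbitClosure v ⊆ {z : ℂ | ‖z‖ = 1} := by
  have hclosed : IsClosed {z : ℂ | ‖z‖ = 1} :=
    IsClosed.preimage continuous_norm isClosed_singleton
  apply closure_minimal ?_ hclosed
  rintro z ⟨g, hg, rfl⟩
  show ‖g * v‖ = 1
  rw [norm_mul, mem_rotClosure_abs M hg, hv, one_mul]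

include M in
lemma nonempty_I : Nonempty I := by
  by_contra h
  haveI := M.P_prob
  have h1 : M.P Set.univ = 1 := measure_univ
  have h2 : (Set.univ : Set (ℕ → I)) = ∅ := by
    ext ω
    exact absurd ⟨ω 0⟩ h
  rw [h2, measure_empty] at h1
  exact zero_ne_one h1

/-- The coding maps are measurable and uniformly bounded. -/
lemma coding_props : ∃ B : ℝ, 1 ≤ B ∧ ∀ ω : ℕ → I,
    Measurable (M.codingMap ω) ∧
      ∀ u : (n : ℕ) → Fin (M.k (ω n)), ‖M.codingMap ω u‖ ≤ B := by
  haveI := nonempty_I M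
  haveI : ∀ i : I, Nonempty (Fin (M.k i)) := fun i => ⟨⟨0, M.k_pos i⟩⟩
  set r : ℝ := Finset.univ.sup' Finset.univ_nonempty
    (fun i : I => ‖M.lam i‖) with hr
  have hr1 : r < 1 := by
    rw [hr, Finset.sup'_lt_iff]
    exact fun i _ => M.lam_lt i
  have hrb : ∀ i : I, ‖M.lam i‖ ≤ r := by
    intro i
    rw [hr]
    exact Finset.le_sup' (fun i : I => ‖M.lam i‖) (Finset.mem_univ i)
  have hr0 : 0 ≤ r := by
    obtain ⟨i⟩ := nonempty_I M
    exact le_trans (norm_nonneg _) (hrb i)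
  set T : ℝ := Finset.univ.sup' Finset.univ_nonempty
    (fun i : I => Finset.univ.sup' Finset.univ_nonempty
      (fun j : Fin (M.k i) => ‖M.tr i j‖)) with hT
  have hTb : ∀ (i : I) (j : Fin (M.k i)), ‖M.tr i j‖ ≤ T := by
    intro i j
    rw [hT]
    exact le_trans
      (Finset.le_sup' (fun j : Fin (M.k i) => ‖M.tr i j‖) (Finset.mem_univ j))
      (Finset.le_sup' (fun i : I => Finset.univ.sup' Finset.univ_nonempty
        (fun j : Fin (M.k i) => ‖M.tr i j‖)) (Finset.mem_univ i))
  refine ⟨max (T / (1 - r)) 1, le_max_right _ _, fun ω => ?_⟩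
  have hterm : ∀ u : (n : ℕ) → Fin (M.k (ω n)), ∀ n : ℕ,
      ‖(∏ j ∈ Finset.range n, M.lam (ω j)) * M.tr (ω n) (u n)‖ ≤ T * r^n := by
    intro u n
    rw [norm_mul]
    have h1 : ‖∏ j ∈ Finset.range n, M.lam (ω j)‖ ≤ r^n := by
      rw [norm_prod]
      calc ∏ j ∈ Finset.range n, ‖M.lam (ω j)‖
          ≤ ∏ j ∈ Finset.range n, r := by
            apply Finset.prod_le_prod (fun _ _ => norm_nonneg _)
            intro j _
            exact hrb (ω j)
        _ = r^n := by rw [Finset.prod_const, Finset.card_range]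
    have h2 : ‖M.tr (ω n) (u n)‖ ≤ T := by
      exact hTb (ω n) (u n)
    calc ‖∏ j ∈ Finset.range n, M.lam (ω j)‖ * ‖M.tr (ω n) (u n)‖
        ≤ r^n * T := mul_le_mul h1 h2 (norm_nonneg _) (by positivity)
      _ = T * r^n := by ring
  have hgeom : Summable (fun n : ℕ => T * r^n) :=
    (summable_geometric_of_lt_one hr0 hr1).mul_left T
  have hsumm : ∀ u : (n : ℕ) → Fin (M.k (ω n)),
      Summable (fun n : ℕ => (∏ j ∈ Finset.range n, M.lam (ω j)) * M.tr (ω n) (u n)) :=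
    fun u => Summable.of_norm_bounded hgeom (hterm u)
  constructor
  · -- measurability
    apply measurable_of_tendsto_metrizable' Filter.atTop
      (f := fun N : ℕ => fun u : (n : ℕ) → Fin (M.k (ω n)) =>
        ∑ n ∈ Finset.range N, (∏ j ∈ Finset.range n, M.lam (ω j)) * M.tr (ω n) (u n))
    · intro N
      apply Finset.measurable_sum
      intro n _
      exact (measurable_of_countable
        (fun x : Fin (M.k (ω n)) => (∏ j ∈ Finset.range n, M.lam (ω j)) * M.tr (ω n) x)).comp
        (measurable_pi_apply n)
    · rw [tendsto_pi_nhds]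
      intro u
      exact (hsumm u).hasSum.tendsto_sum_nat
  · intro u
    rw [PlanarModel.codingMap]
    have hnorm : Summable (fun n : ℕ =>
        ‖(∏ j ∈ Finset.range n, M.lam (ω j)) * M.tr (ω n) (u n)‖) :=
      Summable.of_nonneg_of_le (fun n => norm_nonneg _) (hterm u) hgeom
    calc ‖∑' n : ℕ, (∏ j ∈ Finset.range n, M.lam (ω j)) * M.tr (ω n) (u n)‖
        ≤ ∑' n : ℕ, ‖(∏ j ∈ Finset.range n, M.lam (ω j)) * M.tr (ω n) (u n)‖ :=
          norm_tsum_le_tsum_norm hnorm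
      _ ≤ ∑' n : ℕ, T * r^n := Summable.tsum_le_tsum (hterm u) hnorm hgeom
      _ = T * (1 - r)⁻¹ := by rw [tsum_mul_left, tsum_geometric_of_lt_one hr0 hr1]
      _ = T / (1 - r) := by rw [div_eq_mul_inv]
      _ ≤ max (T / (1 - r)) 1 := le_max_left _ _

/-- Properties of the random measures: probability and uniformly bounded support. -/
lemma eta_props {η : (ℕ → I) → Measure ℂ} (hη : M.IsCodingFamily η) :
    ∃ B : ℝ, 1 ≤ B ∧ ∀ ω : ℕ → I,
      IsProbabilityMeasure (η ω) ∧ η ω {z : ℂ | B < ‖z‖} = 0 := by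
  obtain ⟨B, hB1, hB⟩ := coding_props M
  refine ⟨B, hB1, fun ω => ?_⟩
  obtain ⟨μprod, hprod, heq⟩ := hη ω
  haveI := hprod.1
  obtain ⟨hmeas, hbound⟩ := hB ω
  constructor
  · rw [heq]
    exact Measure.isProbabilityMeasure_map hmeas.aemeasurable
  · rw [heq, Measure.map_apply hmeas (measurableSet_lt measurable_const
      continuous_norm.measurable)]
    have he : (M.codingMap ω) ⁻¹' {z : ℂ | B < ‖z‖} = ∅ := by
      ext u
      simp only [Set.mem_preimage, Set.mem_setOf_eq, Set.mem_empty_iff_false, iff_false, not_lt]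
      exact hbound u
    rw [he, measure_empty]

end ModelFacts
end SSmodel
namespace SSmodel

instance : Nonempty UnitVec := ⟨⟨1, by simp⟩⟩

end SSmodel

open SSmodel SSmodel.PlanarModel

set_option maxHeartbeats 2000000 in
theorem stmt_8 {I : Type} [Fintype I] [MeasurableSpace I] (M : PlanarModel I)
    (hStar : M.AssumptionStar)
    (η : (ℕ → I) → Measure ℂ) (hη : M.IsCodingFamily η)
    (α : ℝ) (hdim : ∀ᵐ ω ∂M.P, ExactDim (η ω) α) (h1 : 1 ≤ α) (h2 : α < 2) :
    ∃ p₀ : ℝ, 0 < p₀ ∧ ∃ κ : ℝ, 0 < κ ∧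
      ∀ ξW : ℂ → Measure ℂ, (∀ v : ℂ, ‖v‖ = 1 → M.IsXiW v (ξW v)) →
        ∀ᵐ ω ∂M.P,
          p₀ ≤ Filter.liminf (fun n : ℕ =>
            ⨅ v : UnitVec,
              ((ξW v.1) {u : ℂ | α - 1 + κ ≤ projHn (lineDir u) (η ω) n}).toReal)
            Filter.atTop := by
  classical
  set ε : ℝ := (2 - α) / 8 with hεdef
  have hε : 0 < ε := by rw [hεdef]; linarith
  have hε1 : ε ≤ 1/8 := by rw [hεdef]; linarith
  refine ⟨1/2, by norm_num, ε, hε, ?_⟩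
  intro ξW hξW
  obtain ⟨B, hB1, hB⟩ := eta_props M hη
  obtain ⟨-, -, i₁, hP1, him⟩ := hStar
  set g : ℂ := M.rotPt i₁ with hgdef
  have hgabs : ‖g‖ = 1 := rotPt_abs M i₁
  have hgne : g ≠ 1 := rotPt_ne_one M him
  set δ₀ : ℝ := ‖g - 1‖ with hδ₀
  have hδ₀pos : 0 < δ₀ := by
    rw [hδ₀, norm_pos_iff]
    exact sub_ne_zero.mpr hgne
  set m₀ : ℝ := min (δ₀/6) (1/2) with hm₀
  have hm₀pos : 0 < m₀ := by
    rw [hm₀]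
    exact lt_min (by linarith) (by norm_num)
  set b₀ : ℝ := (2:ℝ) ^ ((3*ε)/2) with hb₀
  have hb₀1 : 1 < b₀ := by
    rw [hb₀]
    exact Real.one_lt_rpow_iff_of_pos two_pos |>.mpr (Or.inl ⟨one_lt_two, by positivity⟩)
  filter_upwards [hdim] with ω hω
  haveI := (hB ω).1
  have hsupp := (hB ω).2
  have hent := entropy_lower (μ := η ω) hsupp h1 (le_of_lt h2) hε hε1 hω
  have hbig : Filter.Tendsto (fun n : ℕ => b₀ ^ n) Filter.atTop Filter.atTop :=
    tendsto_pow_atTop_atTop_of_one_lt hb₀1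
  have hsmall : ∀ᶠ n : ℕ in Filter.atTop, 5 + 12 / m₀ < b₀ ^ n :=
    hbig.eventually_gt_atTop _
  apply Filter.le_liminf_of_le
  · -- coboundedness: the sequence is bounded above by 1
    apply Filter.IsBoundedUnder.isCoboundedUnder_ge
    refine ⟨1, Filter.eventually_map.mpr (Filter.Eventually.of_forall fun n => ?_)⟩
    have hbdd : BddBelow (Set.range fun v : UnitVec =>
        ((ξW v.1) {u : ℂ | α - 1 + ε ≤ projHn (lineDir u) (η ω) n}).toReal) := by
      refine ⟨0, ?_⟩
      rintro x ⟨v, rfl⟩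
      exact ENNReal.toReal_nonneg
    set v₀ : UnitVec := ⟨1, by simp⟩ with hv₀
    haveI := (hξW v₀.1 v₀.2).1
    calc (⨅ v : UnitVec,
          ((ξW v.1) {u : ℂ | α - 1 + ε ≤ projHn (lineDir u) (η ω) n}).toReal)
        ≤ ((ξW v₀.1) {u : ℂ | α - 1 + ε ≤ projHn (lineDir u) (η ω) n}).toReal :=
          ciInf_le hbdd v₀
      _ ≤ 1 := by
          have h6 := ENNReal.toReal_mono ENNReal.one_ne_top
            (prob_le_one (μ := ξW v₀.1)
              (s := {u : ℂ | α - 1 + ε ≤ projHn (lineDir u) (η ω) n}))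
          simpa using h6
  · filter_upwards [hent, hsmall, Filter.eventually_ge_atTop 1] with n hHn hbn hn1
    have hn0 : (0:ℝ) < (n:ℝ) := by exact_mod_cast hn1
    have hb5 : (0:ℝ) < b₀ ^ n - 5 := by
      have : 0 < 12 / m₀ := by positivity
      linarith
    set ρ : ℝ := 12 / (b₀ ^ n - 5) with hρ
    have hρpos : 0 < ρ := by rw [hρ]; positivity
    have hρsmall : ρ < m₀ := by
      have h7 : 12 / m₀ < b₀ ^ n - 5 := by linarith
      have h8 : (0:ℝ) < 12 / m₀ := by positivity
      have h9 : ρ < 12 / (12 / m₀) := by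
        rw [hρ]
        exact div_lt_div_of_pos_left (by norm_num) h8 h7
      have h10 : (12:ℝ) / (12 / m₀) = m₀ := by field_simp
      linarith
    -- key claim: two bad directions are ρ-close
    have claim : ∀ u₁ u₂ : ℂ, ‖u₁‖ = 1 → ‖u₂‖ = 1 →
        projHn (lineDir u₁) (η ω) n < α - 1 + ε →
        projHn (lineDir u₂) (η ω) n < α - 1 + ε →
        ‖u₁ - u₂‖ ≤ ρ := by
      intro u₁ u₂ hu₁ hu₂ hbad₁ hbad₂
      by_cases heq : u₁ = u₂
      · rw [heq, sub_self, norm_zero]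
        exact hρpos.le
      set d : ℝ := |((starRingEnd ℂ) (lineDir u₁) * lineDir u₂).im| with hd
      have habseq : ‖u₁ - u₂‖ = 2 * d := abs_sub_eq_two_mul_im hu₁ hu₂
      have hdpos : 0 < d := by
        rcases lt_or_eq_of_le
            (abs_nonneg (((starRingEnd ℂ) (lineDir u₁) * lineDir u₂).im)) with h13 | h13
        · rw [hd]; exact h13
        · exfalso
          apply norm_ne_zero_iff.mpr (sub_ne_zero.mpr heq)
          rw [habseq, hd, ← h13, mul_zero]
      have htwo := two_proj_entropy hsupp (lineDir_abs hu₁) (lineDir_abs hu₂) hd hdpos n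
      have hH1a : H1 ((η ω).map (projMap (lineDir u₁))) n < (α - 1 + ε) * n := by
        rw [projHn, Hn1] at hbad₁
        exact (div_lt_iff₀ hn0).mp hbad₁
      have hH1b : H1 ((η ω).map (projMap (lineDir u₂))) n < (α - 1 + ε) * n := by
        rw [projHn, Hn1] at hbad₂
        exact (div_lt_iff₀ hn0).mp hbad₂
      have hL : (3*ε)/2 * n ≤ Real.logb 2 (6/d + 5) := by
        have harith : α - 3*ε - 2*(α - 1 + ε) = 3*ε := by rw [hεdef]; ring
        nlinarith [hHn, htwo, hH1a, hH1b]
      have hpos65 : (0:ℝ) < 6/d + 5 := by positivity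
      have hrpow : (2:ℝ) ^ ((3*ε)/2 * (n:ℝ)) ≤ 6/d + 5 :=
        (Real.le_logb_iff_rpow_le one_lt_two hpos65).mp hL
      have hbneq : b₀ ^ n = (2:ℝ) ^ ((3*ε)/2 * (n:ℝ)) := by
        rw [hb₀, ← Real.rpow_natCast ((2:ℝ) ^ ((3*ε)/2)) n,
          ← Real.rpow_mul (by norm_num : (0:ℝ) ≤ 2)]
      have h14 : b₀ ^ n - 5 ≤ 6 / d := by
        rw [hbneq]; linarith
      have h15 : (b₀ ^ n - 5) * d ≤ 6 := (le_div_iff₀ hdpos).mp h14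
      rw [habseq, hρ]
      rw [le_div_iff₀ hb5]
      nlinarith
    -- now bound the infimum
    apply le_ciInf
    intro v
    obtain ⟨hprob, hinv, hfull⟩ := hξW v.1 v.2
    haveI := hprob
    set Sset : Set ℂ := {u : ℂ | α - 1 + ε ≤ projHn (lineDir u) (η ω) n} with hSset
    by_cases hbad : ∃ u : ℂ, ‖u‖ = 1 ∧ projHn (lineDir u) (η ω) n < α - 1 + ε
    · obtain ⟨x₀, hx₀abs, hx₀bad⟩ := hbad
      set A : Set ℂ := Metric.closedBall x₀ ρ with hA
      have hcover : M.orbitClosure v.1 ⊆ Sset ∪ A := by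
        intro z hz
        have hzabs : ‖z‖ = 1 := orbitClosure_subset_sphere M v.2 hz
        by_cases hzS : α - 1 + ε ≤ projHn (lineDir z) (η ω) n
        · exact Or.inl hzS
        · right
          push_neg at hzS
          have := claim z x₀ hzabs hx₀abs hzS hx₀bad
          rw [Metric.mem_closedBall, Complex.dist_eq]
          exact this
      have hAmeas : MeasurableSet A := measurableSet_closedBall
      have hφmeas : Measurable (fun z : ℂ => g * z) := measurable_id.const_mul g
      have hinv' : (ξW v.1).map (fun z : ℂ => g * z) = ξW v.1 := by
        rw [hgdef]
        exact hinv i₁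
      have hAg : ξW v.1 ((fun z : ℂ => g * z) ⁻¹' A) = ξW v.1 A := by
        conv_rhs => rw [← hinv']
        rw [Measure.map_apply hφmeas hAmeas]
      have hdisj : Disjoint A ((fun z : ℂ => g * z) ⁻¹' A) := by
        rw [Set.disjoint_left]
        intro z hz1 hz2
        rw [hA, Metric.mem_closedBall, dist_eq_norm] at hz1
        rw [Set.mem_preimage, hA, Metric.mem_closedBall, dist_eq_norm] at hz2
        have h16 : ‖g*z - z‖ ≤ 2*ρ := by
          calc ‖g*z - z‖ = ‖(g*z - x₀) - (z - x₀)‖ := by congr 1; ring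
            _ ≤ ‖g*z - x₀‖ + ‖z - x₀‖ := norm_sub_le _ _
            _ ≤ 2*ρ := by linarith
        have h17 : ‖g*z - z‖ = δ₀ * ‖z‖ := by
          have e : g*z - z = (g - 1) * z := by ring
          rw [e, norm_mul, hδ₀]
        have h18 : 1 - ρ ≤ ‖z‖ := by
          have e2 := norm_sub_norm_le x₀ z
          rw [norm_sub_rev] at e2
          have hx₀n : ‖x₀‖ = 1 := by rw [hx₀abs]
          linarith [e2, hz1]
        have hρ2 : ρ ≤ 1/2 := le_trans hρsmall.le (by rw [hm₀]; exact min_le_right _ _)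
        have hρ3 : ρ < δ₀/6 := lt_of_lt_of_le hρsmall (by rw [hm₀]; exact min_le_left _ _)
        rw [h17] at h16
        nlinarith [mul_le_mul_of_nonneg_left h18 hδ₀pos.le, hρpos, hδ₀pos]
      have hsum : ξW v.1 A + ξW v.1 A ≤ 1 := by
        have h21 := measure_union (μ := ξW v.1) hdisj (hφmeas hAmeas)
        have h22 : ξW v.1 (A ∪ (fun z : ℂ => g * z) ⁻¹' A) ≤ 1 := prob_le_one
        rw [h21, hAg] at h22
        exact h22
      have haR : (ξW v.1 A).toReal + (ξW v.1 A).toReal ≤ 1 := by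
        have h23 := ENNReal.toReal_mono ENNReal.one_ne_top hsum
        rw [ENNReal.toReal_add (measure_ne_top _ _) (measure_ne_top _ _)] at h23
        simpa using h23
      have hcoverR : (1:ℝ) ≤ (ξW v.1 Sset).toReal + (ξW v.1 A).toReal := by
        have h24 : (1:ℝ≥0∞) ≤ ξW v.1 Sset + ξW v.1 A := by
          rw [← hfull]
          exact le_trans (measure_mono hcover) (measure_union_le _ _)
        have h25 := ENNReal.toReal_mono
          (ENNReal.add_ne_top.mpr ⟨measure_ne_top _ _, measure_ne_top _ _⟩) h24
        rw [ENNReal.toReal_add (measure_ne_top _ _) (measure_ne_top _ _)] at h25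
        simpa using h25
      linarith
    · push_neg at hbad
      have hcover : M.orbitClosure v.1 ⊆ Sset := by
        intro z hz
        have hzabs : ‖z‖ = 1 := orbitClosure_subset_sphere M v.2 hz
        exact hbad z hzabs
      have h19 : (1:ℝ≥0∞) ≤ ξW v.1 Sset := by
        rw [← hfull]
        exact measure_mono hcover
      have h20 := ENNReal.toReal_mono (measure_ne_top _ _) h19
      simp only [ENNReal.toReal_one] at h20
      linarith
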